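/- arXiv:2006.01909 — 6 statements merged into one kernel-verified Lean document; each statement's English description precedes it below -/
import Mathlib

section
/- Let n ≥ 3 and let Z be a function from the set of polytopes in ℝⁿ containing the origin to ℝⁿ satisfying Z(φP) = φ^{-T} Z(P) for all φ ∈ SL(n,ℝ). Then there exists a ∈ ℝ such that Z(Tⁿ) = a·(1,1,…,1)ᵀ, where Tⁿ = conv{0, e₁, …, eₙ} is the standard simplex. -/
open scoped RealInnerProductSpace

noncomputable section

/-- Euclidean n-space. -/
abbrev E (n : ℕ) := EuclideanSpace ℝ (Fin n)

/-- A (convex) polytope: convex hull of a nonempty finite set. -/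
def IsPolytope {n : ℕ} (P : Set (E n)) : Prop :=
  ∃ S : Finset (E n), S.Nonempty ∧ P = convexHull ℝ (S : Set (E n))

/-- Support function. -/
def suppFn {n : ℕ} (P : Set (E n)) (u : E n) : ℝ :=
  sSup ((fun x => ⟪x, u⟫) '' P)

/-- The face of `P` in direction `u`. -/
def face {n : ℕ} (P : Set (E n)) (u : E n) : Set (E n) :=
  {x ∈ P | ⟪x, u⟫ = suppFn P u}

/-- Dimension of a set: rank of the direction of its affine span. -/
def polyDim {n : ℕ} (P : Set (E n)) : ℕ :=
  Module.finrank ℝ (affineSpan ℝ P).direction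

/-- The set of outer unit facet normals of `P`. -/
def normals {n : ℕ} (P : Set (E n)) : Set (E n) :=
  {u | ‖u‖ = 1 ∧ polyDim (face P u) = n - 1}

/-- `a_P(u)`: the (n-1)-dimensional Hausdorff measure of the facet `F(P,u)`. -/
def facetArea {n : ℕ} (P : Set (E n)) (u : E n) : ℝ :=
  (MeasureTheory.Measure.hausdorffMeasure ((n : ℝ) - 1) (face P u)).toReal

/-- `V(P,u)`: volume of the cone `conv{0, F(P,u)}`. -/
def coneVol {n : ℕ} (P : Set (E n)) (u : E n) : ℝ :=
  (MeasureTheory.volume (convexHull ℝ ({0} ∪ face P u))).toReal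

/-- Facet normals whose facet does not contain the origin in its affine hull. -/
def goodNormals {n : ℕ} (P : Set (E n)) : Set (E n) :=
  {u ∈ normals P | (0 : E n) ∉ affineSpan ℝ (face P u)}

/-- The facet vector `fv_ζ`. -/
def fv {n : ℕ} (ζ : ℝ → ℝ) (P : Set (E n)) : E n :=
  ∑ᶠ u ∈ goodNormals P, (ζ (coneVol P u) / suppFn P u) • u

/-- The linear action of a matrix on Euclidean space. -/
def act {n : ℕ} (M : Matrix (Fin n) (Fin n) ℝ) : E n →ₗ[ℝ] E n :=
  Matrix.toEuclideanLin M

/-- Inverse transpose of a matrix. -/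
def invT {n : ℕ} (M : Matrix (Fin n) (Fin n) ℝ) : Matrix (Fin n) (Fin n) ℝ :=
  (M⁻¹).transpose

/-- The `k`-dimensional standard simplex `T^k = conv{0, e₁, …, e_k}` in `ℝⁿ`. -/
def Tk (n k : ℕ) : Set (E n) :=
  convexHull ℝ ({0} ∪ (fun i : Fin n => EuclideanSpace.single i (1 : ℝ)) '' {i | (i : ℕ) < k})

/-- an SL(n) contravariant function on polytopes containing the origin
takes a multiple of `(1,…,1)` as value on the standard simplex `Tⁿ`. -/
theorem contravariant_value_on_simplex {n : ℕ} (hn : 3 ≤ n) (Z : Set (E n) → E n)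
    (hZ : ∀ (φ : Matrix.SpecialLinearGroup (Fin n) ℝ) (P : Set (E n)),
      IsPolytope P → (0 : E n) ∈ P →
      Z (act (φ : Matrix (Fin n) (Fin n) ℝ) '' P)
        = act (invT (φ : Matrix (Fin n) (Fin n) ℝ)) (Z P)) :
    ∃ a : ℝ, ∀ i : Fin n, Z (Tk n n) i = a := by
  classical
  set f : Fin n → E n := fun i => EuclideanSpace.single i (1 : ℝ) with hf
  -- basic facts about permutation matrices
  have hact : ∀ (σ : Equiv.Perm (Fin n)) (x : E n) (i : Fin n),
      act (σ.permMatrix ℝ) x i = x (σ i) := by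
    intro σ x i
    simp [act, Matrix.toEuclideanLin_apply, Matrix.mulVec, dotProduct,
      Equiv.Perm.permMatrix, PEquiv.toMatrix, Equiv.toPEquiv_apply]
  have hinv : ∀ σ : Equiv.Perm (Fin n), (σ.permMatrix ℝ)⁻¹ = σ⁻¹.permMatrix ℝ := by
    intro σ
    apply Matrix.inv_eq_right_inv
    rw [PEquiv.toMatrix_toPEquiv_mul]
    ext i j
    simp [Equiv.Perm.permMatrix, PEquiv.toMatrix, Matrix.one_apply, Equiv.toPEquiv_apply,
      Equiv.symm_apply_eq, eq_comm]
  have htr : ∀ σ : Equiv.Perm (Fin n), (σ.permMatrix ℝ).transpose = σ⁻¹.permMatrix ℝ := by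
    intro σ
    rw [Equiv.Perm.permMatrix, ← PEquiv.toMatrix_symm, ← Equiv.toPEquiv_symm]
    rfl
  have hinvT : ∀ σ : Equiv.Perm (Fin n), invT (σ.permMatrix ℝ) = σ.permMatrix ℝ := by
    intro σ
    rw [invT, hinv, htr, inv_inv]
  -- the simplex as convex hull of an explicit set
  have hTk : Tk n n = convexHull ℝ ({0} ∪ Set.range f) := by
    rw [Tk]
    congr 2
    have : {i : Fin n | (i : ℕ) < n} = Set.univ := by
      ext i; simp [i.isLt]
    rw [this, Set.image_univ]
  have hpoly : IsPolytope (Tk n n) := by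
    refine ⟨insert 0 (Finset.univ.image f), ⟨0, Finset.mem_insert_self _ _⟩, ?_⟩
    rw [hTk]
    congr 1
    rw [Finset.coe_insert, Finset.coe_image, Finset.coe_univ, Set.image_univ, Set.insert_eq]
  have h0 : (0 : E n) ∈ Tk n n := by
    rw [hTk]
    exact subset_convexHull ℝ _ (Or.inl rfl)
  -- image of the simplex under a permutation matrix
  have himg : ∀ σ : Equiv.Perm (Fin n),
      act (σ.permMatrix ℝ) '' Tk n n = Tk n n := by
    intro σ
    have hsingle : ∀ j : Fin n, act (σ.permMatrix ℝ) (f j) = f (σ⁻¹ j) := by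
      intro j
      ext i
      rw [hact]
      simp only [hf, EuclideanSpace.single_apply]
      by_cases h : σ i = j
      · rw [← h]; simp
      · have h2 : i ≠ σ⁻¹ j := fun hi => h (by rw [hi]; simp)
        simp [h, h2]
        exact h2
    rw [hTk, (act (σ.permMatrix ℝ)).image_convexHull]
    congr 1
    rw [Set.image_union]
    congr 1
    · simp
    · ext x
      constructor
      · rintro ⟨y, ⟨j, rfl⟩, rfl⟩
        exact ⟨σ⁻¹ j, (hsingle j).symm⟩
      · rintro ⟨j, rfl⟩
        exact ⟨f (σ j), ⟨σ j, rfl⟩, by rw [hsingle]; simp⟩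
  -- consequence of contravariance for even permutations
  have key : ∀ σ : Equiv.Perm (Fin n), Equiv.Perm.sign σ = 1 →
      ∀ j : Fin n, Z (Tk n n) j = Z (Tk n n) (σ j) := by
    intro σ hsign j
    have hdet : (σ.permMatrix ℝ).det = 1 := by
      rw [Matrix.det_permutation, hsign]; simp
    set φ : Matrix.SpecialLinearGroup (Fin n) ℝ := ⟨σ.permMatrix ℝ, hdet⟩ with hφ
    have := hZ φ (Tk n n) hpoly h0
    rw [hφ] at this
    simp only at this
    rw [himg σ, hinvT σ] at this
    conv_lhs => rw [this]
    rw [hact]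
  -- conclude
  have hz : (0 : ℕ) < n := by omega
  set z : Fin n := ⟨0, hz⟩ with hzdef
  refine ⟨Z (Tk n n) z, fun i => ?_⟩
  by_cases hi : i = z
  · rw [hi]
  · -- find a third element
    have hcard : 1 < (Finset.univ.erase z).card := by
      rw [Finset.card_erase_of_mem (Finset.mem_univ z), Finset.card_univ, Fintype.card_fin]
      omega
    obtain ⟨k, hk, hki⟩ := Finset.exists_mem_ne hcard i
    have hkz : k ≠ z := Finset.ne_of_mem_erase hk
    set σ : Equiv.Perm (Fin n) := Equiv.swap z i * Equiv.swap i k with hσ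
    have hsign : Equiv.Perm.sign σ = 1 := by
      rw [hσ, Equiv.Perm.sign_mul, Equiv.Perm.sign_swap (Ne.symm hi),
        Equiv.Perm.sign_swap (Ne.symm hki)]
      decide
    have hσz : σ z = i := by
      rw [hσ]
      simp only [Equiv.Perm.mul_apply]
      rw [Equiv.swap_apply_of_ne_of_ne (Ne.symm hi) (Ne.symm hkz), Equiv.swap_apply_left]
    have := key σ hsign z
    rw [hσz] at this
    exact this.symm
end
end

section
/- For convex polytopes P, Q in ℝⁿ with P ∪ Q convex, the set of outer unit facet normals satisfies N(P∪Q) ∪ N(P∩Q) = N(P) ∪ N(Q). -/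
open scoped RealInnerProductSpace

noncomputable section

section Aux

open Topology Filter

variable {n : ℕ}

lemma IsPolytope.isCompact {P : Set (E n)} (h : IsPolytope P) : IsCompact P := by
  obtain ⟨S, -, rfl⟩ := h
  exact S.finite_toSet.isCompact_convexHull ℝ

lemma IsPolytope.nonempty {P : Set (E n)} (h : IsPolytope P) : P.Nonempty := by
  obtain ⟨S, hS, rfl⟩ := h
  exact (Finset.coe_nonempty.mpr hS).mono (subset_convexHull ℝ _)

lemma bddAbove_inner {P : Set (E n)} (hP : IsCompact P) (u : E n) :
    BddAbove ((fun x => ⟪x, u⟫) '' P) :=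
  (hP.image (Continuous.inner continuous_id continuous_const)).bddAbove

lemma le_suppFn {P : Set (E n)} (hP : IsCompact P) {x : E n} (hx : x ∈ P) (u : E n) :
    ⟪x, u⟫ ≤ suppFn P u :=
  le_csSup (bddAbove_inner hP u) ⟨x, hx, rfl⟩

lemma suppFn_eq {P : Set (E n)} {x : E n} {u : E n} (hx : x ∈ P)
    (hub : ∀ y ∈ P, ⟪y, u⟫ ≤ ⟪x, u⟫) : suppFn P u = ⟪x, u⟫ :=
  IsGreatest.csSup_eq ⟨⟨x, hx, rfl⟩, by rintro r ⟨y, hy, rfl⟩; exact hub y hy⟩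

lemma face_nonempty {P : Set (E n)} (hc : IsCompact P) (hne : P.Nonempty) (u : E n) :
    (face P u).Nonempty := by
  obtain ⟨x, hxP, hmax⟩ := hc.exists_isMaxOn hne
    (f := fun x : E n => ⟪x, u⟫) (Continuous.inner continuous_id continuous_const).continuousOn
  exact ⟨x, hxP, (suppFn_eq hxP fun y hy => hmax hy).symm⟩

lemma convex_hplane (u : E n) (c : ℝ) : Convex ℝ {x : E n | ⟪x, u⟫ = c} := by
  intro x hx y hy a b ha hb hab
  simp only [Set.mem_setOf_eq] at hx hy ⊢
  rw [inner_add_left, real_inner_smul_left, real_inner_smul_left, hx, hy, ← add_mul, hab,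
    one_mul]

lemma convex_face {S : Set (E n)} (hS : Convex ℝ S) (u : E n) : Convex ℝ (face S u) := by
  have h : face S u = S ∩ {x | ⟪x, u⟫ = suppFn S u} := rfl
  rw [h]; exact hS.inter (convex_hplane u _)

lemma polyDim_mono {A B : Set (E n)} (h : A ⊆ B) : polyDim A ≤ polyDim B :=
  Submodule.finrank_mono (AffineSubspace.direction_le (affineSpan_mono ℝ h))

lemma polyDim_le_hplane {S : Set (E n)} {u : E n} (hu : u ≠ 0) {c : ℝ}
    (hS : ∀ x ∈ S, ⟪x, u⟫ = c) (hne : S.Nonempty) : polyDim S ≤ n - 1 := by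
  obtain ⟨x₀, hx₀⟩ := hne
  set f : E n →ₗ[ℝ] ℝ := (innerSL ℝ u).toLinearMap with hf
  have hfx : ∀ x : E n, f x = ⟪x, u⟫ := fun x => by
    rw [hf]
    simp only [ContinuousLinearMap.coe_coe, innerSL_apply_apply]
    exact (real_inner_comm u x).symm
  have hsub : S ⊆ (AffineSubspace.mk' x₀ (LinearMap.ker f) : Set (E n)) := by
    intro x hx
    refine AffineSubspace.mem_mk'.mpr ?_
    have : f (x - x₀) = 0 := by
      rw [map_sub, hfx, hfx, hS x hx, hS x₀ hx₀, sub_self]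
    simpa [LinearMap.mem_ker] using this
  have h1 : (affineSpan ℝ S).direction ≤ LinearMap.ker f := by
    have := AffineSubspace.direction_le (affineSpan_le.mpr hsub)
    rwa [AffineSubspace.direction_mk'] at this
  have h2 : Module.finrank ℝ (LinearMap.ker f) = n - 1 := by
    have hrn := LinearMap.finrank_range_add_finrank_ker f
    have hsurj : Function.Surjective f := by
      intro r
      have h0 : ⟪u, u⟫ ≠ 0 := inner_self_ne_zero.mpr hu
      refine ⟨(r / ⟪u, u⟫) • u, ?_⟩
      rw [hfx, real_inner_smul_left]
      exact div_mul_cancel₀ r h0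
    rw [LinearMap.range_eq_top.mpr hsurj, finrank_top, finrank_euclideanSpace_fin] at hrn
    simp only [Module.finrank_self] at hrn
    omega
  calc polyDim S ≤ Module.finrank ℝ (LinearMap.ker f) := Submodule.finrank_mono h1
    _ = n - 1 := h2

lemma convex_subset_union_affine {C : Set (E n)} (hC : Convex ℝ C)
    {S1 S2 : AffineSubspace ℝ (E n)} (h : C ⊆ ↑S1 ∪ ↑S2) : C ⊆ ↑S1 ∨ C ⊆ ↑S2 := by
  by_contra hcon
  push_neg at hcon
  obtain ⟨h1, h2⟩ := hcon
  obtain ⟨a, haC, haS1⟩ := Set.not_subset.mp h1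
  obtain ⟨b, hbC, hbS2⟩ := Set.not_subset.mp h2
  have haS2 : a ∈ S2 := (h haC).resolve_left haS1
  have hbS1 : b ∈ S1 := (h hbC).resolve_right hbS2
  have hmC : midpoint ℝ a b ∈ C := hC.segment_subset haC hbC (midpoint_mem_segment a b)
  have key : ∀ x y : E n, (2 : ℝ) • (midpoint ℝ x y -ᵥ y) +ᵥ y = x := by
    intro x y
    rw [midpoint_vsub_right, smul_smul, mul_invOf_self, one_smul, vsub_vadd]
  rcases h hmC with hm | hm
  · refine haS1 ?_
    have := S1.smul_vsub_vadd_mem (2 : ℝ) hm hbS1 hbS1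
    rwa [key a b] at this
  · refine hbS2 ?_
    have hm' : midpoint ℝ b a ∈ S2 := by rwa [midpoint_comm] at hm
    have := S2.smul_vsub_vadd_mem (2 : ℝ) hm' haS2 haS2
    rwa [key b a] at this

lemma exists_mem_inter {P Q : Set (E n)} (hconv : Convex ℝ (P ∪ Q))
    (hPcl : IsClosed P) (hQcl : IsClosed Q) {x y : E n} (hx : x ∈ P) (hy : y ∈ Q) :
    ∃ z ∈ segment ℝ x y, z ∈ P ∧ z ∈ Q := by
  have hseg : segment ℝ x y ⊆ P ∪ Q :=
    hconv.segment_subset (Set.mem_union_left _ hx) (Set.mem_union_right _ hy)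
  have hpre := (convex_segment x y).isPreconnected
  obtain ⟨z, hzseg, hz⟩ := isPreconnected_closed_iff.mp hpre P Q hPcl hQcl hseg
    ⟨x, left_mem_segment ℝ x y, hx⟩ ⟨y, right_mem_segment ℝ x y, hy⟩
  exact ⟨z, hzseg, hz.1, hz.2⟩

lemma face_subset_of_lt {P Q : Set (E n)} (hPc : IsCompact P)
    (hQc : IsCompact Q) (hQne : Q.Nonempty) (hconv : Convex ℝ (P ∪ Q)) {u : E n}
    (hlt : suppFn P u < suppFn Q u) : face P u ⊆ Q := by
  intro x hx
  obtain ⟨y, hyQ, hyi⟩ := face_nonempty hQc hQne u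
  have hxP : x ∈ P := hx.1
  have hxi : ⟪x, u⟫ = suppFn P u := hx.2
  set t : ℕ → ℝ := fun k => 1 / (k + 1) with ht
  have ht0 : ∀ k, 0 < t k := fun k => by positivity
  have ht1 : ∀ k, t k ≤ 1 := by
    intro k
    rw [ht]
    rw [div_le_one (by positivity)]
    linarith [Nat.cast_nonneg (α := ℝ) k]
  have hmem : ∀ k, (1 - t k) • x + t k • y ∈ Q := by
    intro k
    have hseg : (1 - t k) • x + t k • y ∈ P ∪ Q :=
      hconv (Set.mem_union_left _ hxP) (Set.mem_union_right _ hyQ)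
        (by linarith [ht1 k]) (le_of_lt (ht0 k)) (by ring)
    rcases hseg with hp | hq
    · exfalso
      have h1 : ⟪(1 - t k) • x + t k • y, u⟫ ≤ suppFn P u := le_suppFn hPc hp u
      rw [inner_add_left, real_inner_smul_left, real_inner_smul_left, hxi, hyi] at h1
      nlinarith [ht0 k]
    · exact hq
  have htend : Filter.Tendsto (fun k => (1 - t k) • x + t k • y) Filter.atTop (𝓝 x) := by
    have h0 : Filter.Tendsto t Filter.atTop (𝓝 (0 : ℝ)) :=
      tendsto_one_div_add_atTop_nhds_zero_nat
    have h1 : Filter.Tendsto (fun k => 1 - t k) Filter.atTop (𝓝 (1 - 0 : ℝ)) :=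
      tendsto_const_nhds.sub h0
    have := (h1.smul_const x).add (h0.smul_const y)
    simpa using this
  exact hQc.isClosed.mem_of_tendsto htend (Filter.Eventually.of_forall hmem)

lemma face_union_of_lt {P Q : Set (E n)} (hPc : IsCompact P)
    (hQc : IsCompact Q) (hQne : Q.Nonempty) {u : E n}
    (hlt : suppFn P u < suppFn Q u) : face (P ∪ Q) u = face Q u := by
  obtain ⟨y, hyQ, hyi⟩ := face_nonempty hQc hQne u
  have hkey : suppFn (P ∪ Q) u = suppFn Q u :=
    (suppFn_eq (Set.mem_union_right _ hyQ) (fun z hz => hz.elim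
      (fun hz => ((le_suppFn hPc hz u).trans hlt.le).trans hyi.ge)
      (fun hz => (le_suppFn hQc hz u).trans hyi.ge))).trans hyi
  ext z
  constructor
  · rintro ⟨hz, hi⟩
    rw [hkey] at hi
    rcases hz with hz | hz
    · exfalso
      have := le_suppFn hPc hz u
      rw [hi] at this
      exact absurd this (not_le.mpr hlt)
    · exact ⟨hz, hi⟩
  · rintro ⟨hz, hi⟩
    exact ⟨Set.mem_union_right _ hz, by rw [hkey, hi]⟩

lemma face_inter_of_lt {P Q : Set (E n)} (hPc : IsCompact P) (hPne : P.Nonempty)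
    (hQc : IsCompact Q) (hQne : Q.Nonempty) (hconv : Convex ℝ (P ∪ Q)) {u : E n}
    (hlt : suppFn P u < suppFn Q u) : face (P ∩ Q) u = face P u := by
  have hsub : face P u ⊆ Q := face_subset_of_lt hPc hQc hQne hconv hlt
  obtain ⟨x₀, hx₀P, hx₀i⟩ := face_nonempty hPc hPne u
  have hkey : suppFn (P ∩ Q) u = suppFn P u :=
    (suppFn_eq (Set.mem_inter hx₀P (hsub ⟨hx₀P, hx₀i⟩))
      (fun z hz => (le_suppFn hPc hz.1 u).trans hx₀i.ge)).trans hx₀i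
  ext z
  constructor
  · rintro ⟨hz, hi⟩
    exact ⟨hz.1, by rw [← hkey, hi]⟩
  · rintro ⟨hz, hi⟩
    exact ⟨Set.mem_inter hz (hsub ⟨hz, hi⟩), by rw [hkey, hi]⟩

lemma face_union_of_eq {P Q : Set (E n)} (hPc : IsCompact P) (hPne : P.Nonempty)
    (hQc : IsCompact Q) {u : E n}
    (heq : suppFn P u = suppFn Q u) : face (P ∪ Q) u = face P u ∪ face Q u := by
  obtain ⟨x₀, hx₀P, hx₀i⟩ := face_nonempty hPc hPne u
  have hkey : suppFn (P ∪ Q) u = suppFn P u :=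
    (suppFn_eq (Set.mem_union_left _ hx₀P) (fun z hz => hz.elim
      (fun hz => (le_suppFn hPc hz u).trans hx₀i.ge)
      (fun hz => ((le_suppFn hQc hz u).trans heq.ge).trans hx₀i.ge))).trans hx₀i
  ext z
  constructor
  · rintro ⟨hz, hi⟩
    rw [hkey] at hi
    rcases hz with hz | hz
    · exact Or.inl ⟨hz, hi⟩
    · exact Or.inr ⟨hz, by rw [hi, heq]⟩
  · rintro (⟨hz, hi⟩ | ⟨hz, hi⟩)
    · exact ⟨Set.mem_union_left _ hz, by rw [hkey, hi]⟩
    · exact ⟨Set.mem_union_right _ hz, by rw [hkey, heq]; exact hi⟩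

lemma face_inter_of_eq {P Q : Set (E n)} (hPc : IsCompact P) (hPne : P.Nonempty)
    (hQc : IsCompact Q) (hQne : Q.Nonempty) (hconv : Convex ℝ (P ∪ Q)) {u : E n}
    (heq : suppFn P u = suppFn Q u) : face (P ∩ Q) u = face P u ∩ face Q u := by
  obtain ⟨x₀, hx₀P, hx₀i⟩ := face_nonempty hPc hPne u
  obtain ⟨y₀, hy₀Q, hy₀i⟩ := face_nonempty hQc hQne u
  obtain ⟨z, hzseg, hzP, hzQ⟩ := exists_mem_inter hconv hPc.isClosed hQc.isClosed hx₀P hy₀Q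
  obtain ⟨a, b, ha, hb, hab, rfl⟩ := hzseg
  have hzi : ⟪a • x₀ + b • y₀, u⟫ = suppFn P u := by
    rw [inner_add_left, real_inner_smul_left, real_inner_smul_left, hx₀i, hy₀i, ← heq,
      ← add_mul, hab, one_mul]
  have hkey : suppFn (P ∩ Q) u = suppFn P u :=
    (suppFn_eq (Set.mem_inter hzP hzQ)
      (fun w hw => (le_suppFn hPc hw.1 u).trans hzi.ge)).trans hzi
  ext w
  constructor
  · rintro ⟨hw, hi⟩
    rw [hkey] at hi
    exact ⟨⟨hw.1, hi⟩, ⟨hw.2, by rw [hi, heq]⟩⟩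
  · rintro ⟨⟨hw1, hi1⟩, ⟨hw2, hi2⟩⟩
    exact ⟨Set.mem_inter hw1 hw2, by rw [hkey, hi1]⟩

lemma main_iff {P Q : Set (E n)} (hPc : IsCompact P) (hPne : P.Nonempty)
    (hQc : IsCompact Q) (hQne : Q.Nonempty) (hconv : Convex ℝ (P ∪ Q)) {u : E n}
    (hu : u ≠ 0) :
    (polyDim (face (P ∪ Q) u) = n - 1 ∨ polyDim (face (P ∩ Q) u) = n - 1) ↔
      (polyDim (face P u) = n - 1 ∨ polyDim (face Q u) = n - 1) := by
  have hconv' : Convex ℝ (Q ∪ P) := by rwa [Set.union_comm]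
  rcases lt_trichotomy (suppFn P u) (suppFn Q u) with hlt | heq | hgt
  · rw [face_union_of_lt hPc hQc hQne hlt, face_inter_of_lt hPc hPne hQc hQne hconv hlt]
    tauto
  · have hPle : polyDim (face P u) ≤ n - 1 :=
      polyDim_le_hplane hu (fun x hx => hx.2) (face_nonempty hPc hPne u)
    have hQle : polyDim (face Q u) ≤ n - 1 :=
      polyDim_le_hplane hu (fun x hx => hx.2) (face_nonempty hQc hQne u)
    have hUle : polyDim (face (P ∪ Q) u) ≤ n - 1 :=
      polyDim_le_hplane hu (fun x hx => hx.2)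
        (face_nonempty (hPc.union hQc) (hPne.mono Set.subset_union_left) u)
    have fU : face (P ∪ Q) u = face P u ∪ face Q u := face_union_of_eq hPc hPne hQc heq
    have fI : face (P ∩ Q) u = face P u ∩ face Q u :=
      face_inter_of_eq hPc hPne hQc hQne hconv heq
    constructor
    · rintro (hdim | hdim)
      · have hCconv : Convex ℝ (face P u ∪ face Q u) := fU ▸ convex_face hconv u
        have hsub : face P u ∪ face Q u ⊆
            ↑(affineSpan ℝ (face P u)) ∪ ↑(affineSpan ℝ (face Q u)) :=
          Set.union_subset_union (subset_affineSpan ℝ _) (subset_affineSpan ℝ _)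
        rw [fU] at hdim
        rcases convex_subset_union_affine hCconv hsub with hc | hc
        · left
          have h1 : polyDim (face P u ∪ face Q u) ≤ polyDim (face P u) :=
            Submodule.finrank_mono (AffineSubspace.direction_le (affineSpan_le.mpr hc))
          have h2 := polyDim_mono (Set.subset_union_left (s := face P u) (t := face Q u))
          omega
        · right
          have h1 : polyDim (face P u ∪ face Q u) ≤ polyDim (face Q u) :=
            Submodule.finrank_mono (AffineSubspace.direction_le (affineSpan_le.mpr hc))
          have h2 := polyDim_mono (Set.subset_union_right (s := face P u) (t := face Q u))
          omega
      · left
        rw [fI] at hdim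
        have h1 := polyDim_mono (Set.inter_subset_left (s := face P u) (t := face Q u))
        omega
    · rintro (hdim | hdim)
      · left
        have h1 := polyDim_mono (fU ▸ Set.subset_union_left (s := face P u) (t := face Q u))
        omega
      · left
        have h1 := polyDim_mono (fU ▸ Set.subset_union_right (s := face P u) (t := face Q u))
        omega
  · rw [Set.union_comm P Q, Set.inter_comm P Q,
      face_union_of_lt hQc hPc hPne hgt, face_inter_of_lt hQc hQne hPc hPne hconv' hgt]

end Aux

/-- `N(P∪Q) ∪ N(P∩Q) = N(P) ∪ N(Q)` for polytopes with convex union. -/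
theorem normals_union_inter {n : ℕ} (P Q : Set (E n))
    (hP : IsPolytope P) (hQ : IsPolytope Q) (hPQ : Convex ℝ (P ∪ Q)) :
    normals (P ∪ Q) ∪ normals (P ∩ Q) = normals P ∪ normals Q := by
  ext u
  by_cases hu : ‖u‖ = 1
  · have hu0 : u ≠ 0 := fun h => by simp [h] at hu
    have hiff := main_iff hP.isCompact hP.nonempty hQ.isCompact hQ.nonempty hPQ hu0
    simp only [normals, Set.mem_union, Set.mem_setOf_eq, hu, true_and]
    exact hiff
  · simp [normals, hu]
end
end

section
/- Let ζ : [0,∞) → ℝ be a solution of Cauchy's functional equation. Define the facet vector fv_ζ(P) = Σ_u ζ(V(P,u))/h_P(u) · u, where the sum is over all outer unit facet normals u of P such that the origin is not in the affine hull of the facet F(P,u). Then fv_ζ(φP) = φ^{-T} fv_ζ(P) for every convex polytope P in ℝⁿ and every φ ∈ SL(n,ℝ). -/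
open scoped RealInnerProductSpace

noncomputable section

/-! ### Auxiliary lemmas -/

lemma act_mul_apply {n : ℕ} (M N : Matrix (Fin n) (Fin n) ℝ) (x : E n) :
    act (M * N) x = act M (act N x) := by
  simp [act, Matrix.toEuclideanLin_apply, Matrix.mulVec_mulVec]

lemma act_one_apply {n : ℕ} (x : E n) : act (1 : Matrix (Fin n) (Fin n) ℝ) x = x := by
  simp [act, Matrix.toEuclideanLin_apply]

lemma inner_act {n : ℕ} (M : Matrix (Fin n) (Fin n) ℝ) (x y : E n) :
    ⟪act M x, y⟫ = ⟪x, act M.transpose y⟫ := by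
  simp only [act, Matrix.toEuclideanLin_apply, PiLp.inner_apply, RCLike.inner_apply, conj_trivial,
    WithLp.ofLp_toLp, Matrix.mulVec, dotProduct, Matrix.transpose_apply,
    Finset.sum_mul, Finset.mul_sum]
  rw [Finset.sum_comm]
  congr 1; ext i; congr 1; ext j; ring

lemma det_act {n : ℕ} (M : Matrix (Fin n) (Fin n) ℝ) :
    LinearMap.det (act M) = M.det := by
  rw [act, Matrix.toEuclideanLin_eq_toLin, LinearMap.det_toLin]

lemma suppFn_image {n : ℕ} (M : Matrix (Fin n) (Fin n) ℝ) (P : Set (E n)) (v : E n) :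
    suppFn (act M '' P) v = suppFn P (act M.transpose v) := by
  unfold suppFn
  rw [Set.image_image]
  simp only [inner_act]

open Pointwise in
lemma suppFn_smul {n : ℕ} (P : Set (E n)) {c : ℝ} (hc : 0 ≤ c) (u : E n) :
    suppFn P (c • u) = c * suppFn P u := by
  unfold suppFn
  have h : (fun x : E n => ⟪x, c • u⟫) '' P = c • ((fun x : E n => ⟪x, u⟫) '' P) := by
    rw [← Set.image_smul, Set.image_image]
    simp [inner_smul_right]
  rw [h, Real.sSup_smul_of_nonneg hc, smul_eq_mul]

lemma face_image {n : ℕ} (M : Matrix (Fin n) (Fin n) ℝ) (P : Set (E n)) (v : E n) :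
    face (act M '' P) v = act M '' face P (act M.transpose v) := by
  ext x
  constructor
  · rintro ⟨⟨y, hy, rfl⟩, he⟩
    exact ⟨y, ⟨hy, by rw [← inner_act, he, suppFn_image]⟩, rfl⟩
  · rintro ⟨y, ⟨hy, he⟩, rfl⟩
    exact ⟨⟨y, hy, rfl⟩, by rw [inner_act, he, suppFn_image]⟩

lemma face_smul {n : ℕ} (P : Set (E n)) {c : ℝ} (hc : 0 < c) (u : E n) :
    face P (c • u) = face P u := by
  unfold face
  ext x
  simp only [Set.mem_setOf_eq, inner_smul_right, suppFn_smul P hc.le]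
  exact and_congr Iff.rfl (mul_right_inj' hc.ne')

/-- the facet vector is SL(n) contravariant. -/
theorem fv_contravariant {n : ℕ} (ζ : ℝ → ℝ)
    (hζ : ∀ a b : ℝ, 0 ≤ a → 0 ≤ b → ζ (a + b) = ζ a + ζ b)
    (P : Set (E n)) (hP : IsPolytope P) (φ : Matrix.SpecialLinearGroup (Fin n) ℝ) :
    fv ζ (act (φ : Matrix (Fin n) (Fin n) ℝ) '' P)
      = act (invT (φ : Matrix (Fin n) (Fin n) ℝ)) (fv ζ P) := by
  set A := (φ : Matrix (Fin n) (Fin n) ℝ) with hAdef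
  have hdet : A.det = 1 := φ.property
  have hdet' : IsUnit A.det := by rw [hdet]; exact isUnit_one
  have hAi : A⁻¹ * A = 1 := Matrix.nonsing_inv_mul A hdet'
  have hAi' : A * A⁻¹ = 1 := Matrix.mul_nonsing_inv A hdet'
  set B := invT A with hBdef
  -- basic identities
  have hTB : ∀ x : E n, act A.transpose (act B x) = x := by
    intro x
    rw [← act_mul_apply]
    have : A.transpose * B = 1 := by
      rw [hBdef, invT, ← Matrix.transpose_mul, hAi, Matrix.transpose_one]
    rw [this, act_one_apply]
  have hBT : ∀ x : E n, act B (act A.transpose x) = x := by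
    intro x
    rw [← act_mul_apply]
    have : B * A.transpose = 1 := by
      rw [hBdef, invT, ← Matrix.transpose_mul, hAi', Matrix.transpose_one]
    rw [this, act_one_apply]
  have hAA : ∀ x : E n, act A (act A⁻¹ x) = x := by
    intro x; rw [← act_mul_apply, hAi', act_one_apply]
  have hAA' : ∀ x : E n, act A⁻¹ (act A x) = x := by
    intro x; rw [← act_mul_apply, hAi, act_one_apply]
  have hinjA : Function.Injective (act A) := Function.LeftInverse.injective hAA'
  have hinjB : Function.Injective (act B) := Function.LeftInverse.injective hTB
  have hinjT : Function.Injective (act A.transpose) := Function.LeftInverse.injective hBT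
  -- the linear equivalence given by A
  let eL : E n ≃ₗ[ℝ] E n :=
    LinearEquiv.ofLinear (act A) (act A⁻¹)
      (LinearMap.ext fun x => by simpa using hAA x)
      (LinearMap.ext fun x => by simpa using hAA' x)
  have heL : ∀ x, eL x = act A x := fun _ => rfl
  -- dimension invariance
  have hspan : ∀ s : Set (E n),
      affineSpan ℝ (act A '' s) = (affineSpan ℝ s).map (act A).toAffineMap := by
    intro s
    rw [AffineSubspace.map_span]
    rfl
  have hdim : ∀ s : Set (E n), polyDim (act A '' s) = polyDim s := by
    intro s
    unfold polyDim
    rw [hspan, AffineSubspace.map_direction]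
    have : (act A).toAffineMap.linear = (eL : E n →ₗ[ℝ] E n) := rfl
    rw [this, LinearEquiv.finrank_map_eq]
  -- zero membership invariance
  have hzero : ∀ s : Set (E n),
      ((0 : E n) ∈ affineSpan ℝ (act A '' s)) ↔ ((0 : E n) ∈ affineSpan ℝ s) := by
    intro s
    rw [hspan]
    constructor
    · rintro h
      rw [AffineSubspace.mem_map] at h
      obtain ⟨y, hy, hy0⟩ := h
      have : y = 0 := hinjA (by simpa using hy0)
      rwa [this] at hy
    · intro h
      rw [AffineSubspace.mem_map]
      exact ⟨0, h, by simp⟩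
  -- volume invariance
  have hvol : ∀ s : Set (E n), MeasureTheory.volume (act A '' s) = MeasureTheory.volume s := by
    intro s
    rw [MeasureTheory.Measure.addHaar_image_linearMap, det_act, hdet]
    simp
  -- the normal transformation map
  set Φ : E n → E n := fun u => ‖act B u‖⁻¹ • act B u with hΦdef
  have hBne : ∀ u : E n, u ≠ 0 → act B u ≠ 0 := by
    intro u hu h
    exact hu (by rw [← hTB u, h, map_zero])
  have hTne : ∀ u : E n, u ≠ 0 → act A.transpose u ≠ 0 := by
    intro u hu h
    exact hu (by rw [← hBT u, h, map_zero])
  have hΦnorm : ∀ u : E n, u ≠ 0 → ‖Φ u‖ = 1 := by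
    intro u hu
    have h := hBne u hu
    rw [hΦdef]
    simp only [norm_smul, norm_inv, norm_norm]
    rw [inv_mul_cancel₀ (norm_ne_zero_iff.2 h)]
  have hface : ∀ u : E n, u ≠ 0 → face (act A '' P) (Φ u) = act A '' face P u := by
    intro u hu
    have h := hBne u hu
    rw [hΦdef]
    simp only
    rw [face_smul _ (inv_pos.2 (norm_pos_iff.2 h)), face_image, hTB]
  have hsupp : ∀ u : E n, suppFn (act A '' P) (Φ u) = ‖act B u‖⁻¹ * suppFn P u := by
    intro u
    rw [hΦdef]
    simp only
    rw [suppFn_smul _ (inv_nonneg.2 (norm_nonneg _)), suppFn_image, hTB]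
  -- goodNormals transforms along Φ
  have hgood : goodNormals (act A '' P) = Φ '' goodNormals P := by
    ext v
    constructor
    · rintro ⟨⟨hv1, hvdim⟩, hv0⟩
      have hvne : v ≠ 0 := fun h => by simp [h] at hv1
      set w : E n := act A.transpose v with hwdef
      have hwne : w ≠ 0 := hTne v hvne
      have hwpos : (0:ℝ) < ‖w‖ := norm_pos_iff.2 hwne
      refine ⟨‖w‖⁻¹ • w, ?_, ?_⟩
      · -- ‖w‖⁻¹ • w ∈ goodNormals P
        have hfw : face (act A '' P) v = act A '' face P w := by
          rw [face_image, hwdef]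
        have hfsm : face P (‖w‖⁻¹ • w) = face P w :=
          face_smul _ (inv_pos.2 hwpos) w
        refine ⟨⟨?_, ?_⟩, ?_⟩
        · simp [norm_smul, abs_of_pos (inv_pos.2 hwpos), inv_mul_cancel₀ hwpos.ne']
        · rw [hfsm, ← hdim (face P w), ← hfw]
          exact hvdim
        · rw [hfsm, ← hzero (face P w), ← hfw]
          exact hv0
      · -- Φ (‖w‖⁻¹ • w) = v
        have hBw : act B (‖w‖⁻¹ • w) = ‖w‖⁻¹ • v := by
          rw [map_smul, hwdef, hBT]
        rw [hΦdef]
        simp only [hBw, norm_smul, norm_inv, norm_norm, hv1, mul_one, inv_inv, smul_smul]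
        rw [mul_inv_cancel₀ hwpos.ne', one_smul]
    · rintro ⟨u, ⟨⟨hu1, hud⟩, hu0⟩, rfl⟩
      have hune : u ≠ 0 := fun h => by simp [h] at hu1
      refine ⟨⟨hΦnorm u hune, ?_⟩, ?_⟩
      · rw [hface u hune, hdim]
        exact hud
      · rw [hface u hune, hzero]
        exact hu0
  -- injectivity of Φ on goodNormals P
  have hinjΦ : Set.InjOn Φ (goodNormals P) := by
    intro u hu u' hu' h
    have hu1 : ‖u‖ = 1 := hu.1.1
    have hu1' : ‖u'‖ = 1 := hu'.1.1
    have hune : u ≠ 0 := fun h0 => by simp [h0] at hu1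
    have hune' : u' ≠ 0 := fun h0 => by simp [h0] at hu1'
    have h2 : ‖act B u‖⁻¹ • u = ‖act B u'‖⁻¹ • u' := by
      have := congrArg (act A.transpose) h
      simpa only [hΦdef, map_smul, hTB] using this
    have hc : ‖act B u‖⁻¹ = ‖act B u'‖⁻¹ := by
      have := congrArg (fun x : E n => ‖x‖) h2
      simpa [norm_smul, hu1, hu1', abs_of_nonneg (inv_nonneg.2 (norm_nonneg _))] using this
    have hcpos : (0:ℝ) < ‖act B u‖⁻¹ := inv_pos.2 (norm_pos_iff.2 (hBne u hune))
    rw [hc] at h2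
    exact smul_right_injective (E n) (by rw [← hc]; exact hcpos.ne') h2
  -- cone volume invariance
  have hcone : ∀ u : E n, u ≠ 0 → coneVol (act A '' P) (Φ u) = coneVol P u := by
    intro u hu
    unfold coneVol
    rw [hface u hu]
    have h1 : {(0 : E n)} ∪ act A '' face P u = act A '' ({0} ∪ face P u) := by
      rw [Set.image_union, Set.image_singleton, map_zero]
    rw [h1, ← LinearMap.image_convexHull, hvol]
  -- the summand identity
  have hsummand : ∀ u ∈ goodNormals P,
      (ζ (coneVol (act A '' P) (Φ u)) / suppFn (act A '' P) (Φ u)) • Φ u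
        = act B ((ζ (coneVol P u) / suppFn P u) • u) := by
    intro u hu
    have hune : u ≠ 0 := fun h0 => by simp [h0] at hu; exact absurd hu.1.1 (by simp)
    have hc : ‖act B u‖ ≠ 0 := norm_ne_zero_iff.2 (hBne u hune)
    rw [hcone u hune, hsupp u, hΦdef]
    simp only [map_smul, smul_smul]
    congr 1
    rcases eq_or_ne (suppFn P u) 0 with h0 | h0
    · simp [h0]
    · field_simp
  -- put it all together
  rw [fv, hgood, finsum_mem_image hinjΦ]
  rw [finsum_mem_congr rfl hsummand]
  rw [fv]
  rw [finsum_mem_def, finsum_mem_def]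
  have hmap := AddMonoidHom.map_finsum_of_injective (act B).toAddMonoidHom hinjB
      ((goodNormals P).indicator fun u => (ζ (coneVol P u) / suppFn P u) • u)
  simp only [LinearMap.toAddMonoidHom_coe] at hmap
  rw [hmap]
  congr 1
  funext x
  by_cases hx : x ∈ goodNormals P
  · simp [Set.indicator_of_mem hx]
  · simp [Set.indicator_of_notMem hx]
end
end

section
/- For λ ∈ (0,1), let φ₁ ∈ SL(n,ℝ) be defined by φ₁e₁ = λe₁ + (1−λ)e₂, φ₁e₂ = e₂, φ₁eₙ = eₙ/λ, φ₁e_j = e_j otherwise, and let ψ₁ ∈ SL(n,ℝ) be defined by ψ₁e₁ = e₁, ψ₁e₂ = λe₁ + (1−λ)e₂, ψ₁eₙ = eₙ/(1−λ), ψ₁e_j = e_j otherwise. Then for 2 ≤ i < n and H the hyperplane through the origin with normal (1−λ)e₁ − λe₂: T^i ∩ H⁻ = φ₁T^i, T^i ∩ H⁺ = ψ₁T^i, and T^i ∩ H = φ₁ conv{0, e₁, e₃, …, e_i}, where H^± are the closed halfspaces bounded by H. -/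
open scoped RealInnerProductSpace

noncomputable section

/-- `hatT n i = conv{0, e₁, e₃, …, e_i}` (0-based indices `{0} ∪ {2,…,i-1}`). -/
def hatT (n i : ℕ) : Set (E n) :=
  convexHull ℝ ({0} ∪ (fun j : Fin n => EuclideanSpace.single j (1 : ℝ)) ''
    {j | (j : ℕ) = 0 ∨ (2 ≤ (j : ℕ) ∧ (j : ℕ) < i)})

/-- The matrix `φ₁`. -/
def phi1 (n : ℕ) (l : ℝ) : Matrix (Fin n) (Fin n) ℝ :=
  Matrix.of fun i j =>
    if (j : ℕ) = 0 then (if (i : ℕ) = 0 then l else if (i : ℕ) = 1 then 1 - l else 0)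
    else if (j : ℕ) = n - 1 then (if i = j then 1 / l else 0)
    else (if i = j then 1 else 0)

/-- The matrix `ψ₁`. -/
def psi1 (n : ℕ) (l : ℝ) : Matrix (Fin n) (Fin n) ℝ :=
  Matrix.of fun i j =>
    if (j : ℕ) = 1 then (if (i : ℕ) = 0 then l else if (i : ℕ) = 1 then 1 - l else 0)
    else if (j : ℕ) = n - 1 then (if i = j then 1 / (1 - l) else 0)
    else (if i = j then 1 else 0)

/-- The normal vector `(1-λ)e₁ - λe₂` of the hyperplane `H`. -/
def hNormal (n : ℕ) (l : ℝ) : E n :=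
  WithLp.toLp 2 (fun j : Fin n => if (j : ℕ) = 0 then 1 - l else if (j : ℕ) = 1 then -l else 0)

/-! ### Auxiliary material -/

/-- The vector `v = λe₁ + (1-λ)e₂`. -/
def vv (n : ℕ) (l : ℝ) : E n :=
  WithLp.toLp 2 (fun k : Fin n => if (k : ℕ) = 0 then l else if (k : ℕ) = 1 then 1 - l else 0)

lemma Esum_apply {n : ℕ} {ι : Type*} (s : Finset ι) (f : ι → E n) (k : Fin n) :
    (∑ j ∈ s, f j) k = ∑ j ∈ s, f j k := by
  rw [WithLp.ofLp_sum]; exact Finset.sum_apply k s _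

lemma sum_support_pair {n : ℕ} (f : Fin n → ℝ) (a b : Fin n) (hab : a ≠ b)
    (hf : ∀ j, j ≠ a → j ≠ b → f j = 0) : ∑ j, f j = f a + f b := by
  rw [← Finset.sum_pair hab]
  exact (Finset.sum_subset (Finset.subset_univ _) (fun j _ hj => by
    simp only [Finset.mem_insert, Finset.mem_singleton] at hj
    push_neg at hj
    exact hf j hj.1 hj.2)).symm

lemma prod_support_pair {n : ℕ} (f : Fin n → ℝ) (a b : Fin n) (hab : a ≠ b)
    (hf : ∀ j, j ≠ a → j ≠ b → f j = 1) : ∏ j, f j = f a * f b := by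
  rw [← Finset.prod_pair hab]
  exact (Finset.prod_subset (Finset.subset_univ _) (fun j _ hj => by
    simp only [Finset.mem_insert, Finset.mem_singleton] at hj
    push_neg at hj
    exact hf j hj.1 hj.2)).symm

lemma eq_sum_single {n : ℕ} (x : E n) : x = ∑ j, x j • EuclideanSpace.single j 1 := by
  ext k
  rw [Esum_apply]
  simp [EuclideanSpace.single_apply]

lemma mem_hull_of_sum {n : ℕ} {s : Set (E n)} (h0 : (0 : E n) ∈ s)
    (w : Fin n → ℝ) (z : Fin n → E n) (hw : ∀ j, 0 ≤ w j) (hsum : ∑ j, w j ≤ 1)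
    (hz : ∀ j, w j ≠ 0 → z j ∈ s) : (∑ j, w j • z j) ∈ convexHull ℝ s := by
  classical
  set t : Finset (Fin n) := Finset.univ.filter (fun j => w j ≠ 0) with ht
  have hxt : ∑ j, w j • z j = ∑ j ∈ t, w j • z j := by
    rw [Finset.sum_filter_of_ne]
    intro j _ h hw0
    exact h (by rw [hw0, zero_smul])
  rw [hxt]
  by_cases hte : t = ∅
  · rw [hte, Finset.sum_empty]
    exact subset_convexHull ℝ s h0
  · have hpos : 0 < ∑ j ∈ t, w j := by
      obtain ⟨a, ha⟩ := Finset.nonempty_of_ne_empty hte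
      have haw : w a ≠ 0 := (Finset.mem_filter.1 ha).2
      exact Finset.sum_pos' (fun j _ => hw j) ⟨a, ha, lt_of_le_of_ne (hw a) (Ne.symm haw)⟩
    have hc : t.centerMass w z ∈ convexHull ℝ s :=
      Finset.centerMass_mem_convexHull t (fun j _ => hw j) hpos
        (fun j hj => hz j (Finset.mem_filter.1 hj).2)
    have hsum' : ∑ j ∈ t, w j ≤ 1 :=
      le_trans (Finset.sum_le_sum_of_subset_of_nonneg (Finset.subset_univ t)
        (fun j _ _ => hw j)) hsum
    have key := (convex_convexHull ℝ s) hc (subset_convexHull ℝ s h0)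
      hpos.le (by linarith : (0:ℝ) ≤ 1 - ∑ j ∈ t, w j) (by ring)
    have : (∑ j ∈ t, w j) • t.centerMass w z + (1 - ∑ j ∈ t, w j) • (0 : E n)
        = ∑ j ∈ t, w j • z j := by
      rw [Finset.centerMass, smul_smul, mul_inv_cancel₀ hpos.ne', one_smul, smul_zero, add_zero]
    rwa [this] at key

lemma mem_Tk_iff {n i : ℕ} (x : E n) :
    x ∈ Tk n i ↔ (∀ j, 0 ≤ x j) ∧ (∀ j : Fin n, i ≤ (j : ℕ) → x j = 0) ∧ ∑ j, x j ≤ 1 := by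
  constructor
  · intro hx
    have hconv : Convex ℝ {y : E n | (∀ j, 0 ≤ y j) ∧ (∀ j : Fin n, i ≤ (j : ℕ) → y j = 0)
        ∧ ∑ j, y j ≤ 1} := by
      intro p hp q hq a b ha hb hab
      refine ⟨fun j => ?_, fun j hj => ?_, ?_⟩
      · have : (a • p + b • q) j = a * p j + b * q j := rfl
        rw [this]; have := hp.1 j; have := hq.1 j; positivity
      · have : (a • p + b • q) j = a * p j + b * q j := rfl
        rw [this, hp.2.1 j hj, hq.2.1 j hj]; ring
      · have hs : ∑ j, (a • p + b • q) j = a * ∑ j, p j + b * ∑ j, q j := by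
          rw [Finset.mul_sum, Finset.mul_sum, ← Finset.sum_add_distrib]
          rfl
        rw [hs]
        have := hp.2.2; have := hq.2.2
        nlinarith
    have := convexHull_min ?_ hconv hx
    · exact this
    · rintro y (rfl | ⟨j, hj, rfl⟩)
      · refine ⟨fun j => le_refl 0, fun j _ => rfl, by simp⟩
      · refine ⟨fun k => ?_, fun k hk => ?_, ?_⟩
        · simp only []
          rw [EuclideanSpace.single_apply]
          split_ifs <;> norm_num
        · simp only []
          rw [EuclideanSpace.single_apply, if_neg]
          rintro rfl
          simp only [Set.mem_setOf_eq] at hj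
          omega
        · simp [EuclideanSpace.single_apply]
  · rintro ⟨h1, h2, h3⟩
    rw [eq_sum_single x]
    refine mem_hull_of_sum (Or.inl rfl) _ _ h1 h3 (fun j hj => ?_)
    exact Or.inr ⟨j, by by_contra h; exact hj (h2 j (by simpa using h)), rfl⟩

lemma inner_eq_sum {n : ℕ} (x u : E n) : ⟪x, u⟫ = ∑ j, x j * u j := by
  simp [PiLp.inner_apply]
  try ring_nf
  exact Finset.sum_congr rfl (fun j _ => mul_comm _ _)

lemma act_single {n : ℕ} (M : Matrix (Fin n) (Fin n) ℝ) (j k : Fin n) :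
    act M (EuclideanSpace.single j 1) k = M k j := by
  simp [act, Matrix.toEuclideanLin_apply, Matrix.mulVec, dotProduct,
    EuclideanSpace.single_apply, mul_ite]

lemma inner_hNormal {n : ℕ} (l : ℝ) (x : E n) (a b : Fin n) (ha : (a : ℕ) = 0)
    (hb : (b : ℕ) = 1) :
    ⟪x, hNormal n l⟫ = (1 - l) * x a - l * x b := by
  rw [inner_eq_sum]
  rw [sum_support_pair (fun j => x j * hNormal n l j) a b
    (fun h => by rw [h, hb] at ha; exact absurd ha one_ne_zero) ?_]
  · simp only [hNormal, ha, hb, if_pos, if_neg one_ne_zero]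
    norm_num
    ring
  · intro j hj0 hj1
    have h0 : (j : ℕ) ≠ 0 := fun h => hj0 (Fin.ext (by rw [h, ha]))
    have h1 : (j : ℕ) ≠ 1 := fun h => hj1 (Fin.ext (by rw [h, hb]))
    simp [hNormal, h0, h1]

lemma phi1_det {n : ℕ} (hn : 3 ≤ n) (l : ℝ) (hl0 : l ≠ 0) : (phi1 n l).det = 1 := by
  rw [Matrix.det_of_lowerTriangular _ ?_]
  · rw [prod_support_pair _ ⟨0, by omega⟩ ⟨n-1, by omega⟩
      (by simp only [ne_eq, Fin.mk.injEq]; omega) ?_]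
    · have h1 : phi1 n l ⟨0, by omega⟩ ⟨0, by omega⟩ = l := by simp [phi1]
      have h2 : phi1 n l ⟨n-1, by omega⟩ ⟨n-1, by omega⟩ = 1 / l := by
        simp only [phi1, Matrix.of_apply]
        rw [if_neg (show ¬((n-1:ℕ) = 0) by omega)]
        simp
      rw [h1, h2]; field_simp
    · intro j hj0 hjn
      have h0 : (j : ℕ) ≠ 0 := fun h => hj0 (Fin.ext h)
      have hn1 : (j : ℕ) ≠ n - 1 := fun h => hjn (Fin.ext (by simp [h]))
      simp [phi1, h0, hn1]
  · intro a b hab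
    have hab0 : a < b := OrderDual.toDual_lt_toDual.mp hab
    have hab' : (a:ℕ) < (b:ℕ) := Fin.lt_def.mp hab0
    simp only [phi1, Matrix.of_apply]
    rw [if_neg (by omega)]
    have hne : a ≠ b := Fin.ne_of_val_ne (by omega)
    split_ifs <;> first | rfl | exact absurd ‹a = b› hne

lemma psi1_det {n : ℕ} (hn : 3 ≤ n) (l : ℝ) (hl1 : l ≠ 1) : (psi1 n l).det = 1 := by
  rw [Matrix.det_of_upperTriangular ?_]
  · rw [prod_support_pair _ ⟨1, by omega⟩ ⟨n-1, by omega⟩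
      (by simp only [ne_eq, Fin.mk.injEq]; omega) ?_]
    · have h1 : psi1 n l ⟨1, by omega⟩ ⟨1, by omega⟩ = 1 - l := by simp [psi1]
      have h2 : psi1 n l ⟨n-1, by omega⟩ ⟨n-1, by omega⟩ = 1 / (1 - l) := by
        simp only [psi1, Matrix.of_apply]
        rw [if_neg (show ¬((n-1:ℕ) = 1) by omega)]
        simp
      rw [h1, h2]
      have : (1:ℝ) - l ≠ 0 := sub_ne_zero.2 (Ne.symm hl1)
      field_simp
    · intro j hj1 hjn
      have h1 : (j : ℕ) ≠ 1 := fun h => hj1 (Fin.ext h)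
      have hn1 : (j : ℕ) ≠ n - 1 := fun h => hjn (Fin.ext (by simp [h]))
      simp [psi1, h1, hn1]
  · intro a b hab
    have hab' : (b:ℕ) < (a:ℕ) := Fin.lt_def.mp hab
    simp only [psi1, Matrix.of_apply]
    have hne : a ≠ b := Fin.ne_of_val_ne (by omega)
    split_ifs <;> first | rfl | omega | exact absurd ‹a = b› hne

lemma decomp_phi {n : ℕ} {l : ℝ} (hl0 : l ≠ 0) (x : E n) (a b : Fin n)
    (ha : (a : ℕ) = 0) (hb : (b : ℕ) = 1) :
    x = ∑ j : Fin n, (if (j : ℕ) = 0 then x a / l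
        else if (j : ℕ) = 1 then x b - (1 - l) / l * x a else x j) •
      (if (j : ℕ) = 0 then vv n l else EuclideanSpace.single j 1) := by
  set w : Fin n → ℝ := fun j => if (j : ℕ) = 0 then x a / l
        else if (j : ℕ) = 1 then x b - (1 - l) / l * x a else x j with hw
  set z : Fin n → E n := fun j => if (j : ℕ) = 0 then vv n l
        else EuclideanSpace.single j 1 with hz
  ext k
  rw [Esum_apply]
  change x k = ∑ j, (w j • z j) k
  have happ : ∀ j, (w j • z j) k = w j * z j k := fun _ => rfl
  simp only [happ]
  have hz0 : ∀ j : Fin n, j ≠ a → z j k = if k = j then 1 else 0 := by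
    intro j hj
    have : (j : ℕ) ≠ 0 := fun h => hj (Fin.ext (by rw [h, ha]))
    rw [hz]; simp only [this, if_false, EuclideanSpace.single_apply]
  by_cases hk0 : (k : ℕ) = 0
  · have hk : k = a := Fin.ext (by rw [hk0, ha])
    rw [Fintype.sum_eq_single a ?_]
    · have : z a k = l := by rw [hz]; simp [vv, ha, hk0]
      rw [this, hw]
      simp only [ha, if_pos rfl, if_true, if_false, Nat.zero_ne_one, Nat.one_ne_zero]
      rw [hk]
      field_simp
    · intro j hj
      rw [hz0 j hj, if_neg (by rw [hk]; exact fun h => hj h.symm), mul_zero]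
  · by_cases hk1 : (k : ℕ) = 1
    · have hk : k = b := Fin.ext (by rw [hk1, hb])
      rw [sum_support_pair _ a k (fun h => hk0 (by rw [← h, ha])) ?_]
      · have e1 : z a k = 1 - l := by rw [hz]; simp [ha, vv, hk0, hk1]
        have e2 : z k k = 1 := by
          rw [hz0 k (fun h => hk0 (by rw [h, ha])), if_pos rfl]
        rw [e1, e2, hw]
        simp only [ha, if_pos rfl, hk1, hk0, if_false, if_pos rfl, mul_one, if_true, Nat.zero_ne_one, Nat.one_ne_zero]
        rw [hk]
        field_simp
        try ring
      · intro j hj0 hjk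
        rw [hz0 j hj0, if_neg (fun h => hjk h.symm), mul_zero]
    · rw [sum_support_pair _ a k (fun h => hk0 (by rw [← h, ha])) ?_]
      · have e1 : z a k = 0 := by rw [hz]; simp [ha, vv, hk0, hk1]
        have e2 : z k k = 1 := by
          rw [hz0 k (fun h => hk0 (by rw [h, ha])), if_pos rfl]
        rw [e1, e2, mul_zero, mul_one, zero_add, hw]
        simp only [hk0, hk1, if_false]
      · intro j hj0 hjk
        rw [hz0 j hj0, if_neg (fun h => hjk h.symm), mul_zero]

lemma decomp_psi {n : ℕ} {l : ℝ} (hl1 : (1:ℝ) - l ≠ 0) (x : E n) (a b : Fin n)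
    (ha : (a : ℕ) = 0) (hb : (b : ℕ) = 1) :
    x = ∑ j : Fin n, (if (j : ℕ) = 1 then x b / (1 - l)
        else if (j : ℕ) = 0 then x a - l / (1 - l) * x b else x j) •
      (if (j : ℕ) = 1 then vv n l else EuclideanSpace.single j 1) := by
  set w : Fin n → ℝ := fun j => if (j : ℕ) = 1 then x b / (1 - l)
        else if (j : ℕ) = 0 then x a - l / (1 - l) * x b else x j with hw
  set z : Fin n → E n := fun j => if (j : ℕ) = 1 then vv n l
        else EuclideanSpace.single j 1 with hz
  ext k
  rw [Esum_apply]
  change x k = ∑ j, (w j • z j) k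
  have happ : ∀ j, (w j • z j) k = w j * z j k := fun _ => rfl
  simp only [happ]
  have hz1 : ∀ j : Fin n, j ≠ b → z j k = if k = j then 1 else 0 := by
    intro j hj
    have : (j : ℕ) ≠ 1 := fun h => hj (Fin.ext (by rw [h, hb]))
    rw [hz]; simp only [this, if_false, EuclideanSpace.single_apply]
  by_cases hk1 : (k : ℕ) = 1
  · have hk : k = b := Fin.ext (by rw [hk1, hb])
    rw [Fintype.sum_eq_single b ?_]
    · have : z b k = 1 - l := by rw [hz]; simp [vv, hb, hk1]
      rw [this, hw]
      simp only [hb, if_pos rfl, if_true, if_false, Nat.zero_ne_one, Nat.one_ne_zero]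
      rw [hk]
      field_simp
    · intro j hj
      rw [hz1 j hj, if_neg (by rw [hk]; exact fun h => hj h.symm), mul_zero]
  · by_cases hk0 : (k : ℕ) = 0
    · have hk : k = a := Fin.ext (by rw [hk0, ha])
      rw [sum_support_pair _ b k (fun h => hk1 (by rw [← h, hb])) ?_]
      · have e1 : z b k = l := by rw [hz]; simp [hb, vv, hk0]
        have e2 : z k k = 1 := by
          rw [hz1 k (fun h => hk1 (by rw [h, hb])), if_pos rfl]
        rw [e1, e2, hw]
        simp only [hb, if_pos rfl, hk1, hk0, if_false, if_pos rfl, mul_one, if_true, Nat.zero_ne_one, Nat.one_ne_zero]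
        rw [hk]
        field_simp
        try ring
      · intro j hj1 hjk
        rw [hz1 j hj1, if_neg (fun h => hjk h.symm), mul_zero]
    · rw [sum_support_pair _ b k (fun h => hk1 (by rw [← h, hb])) ?_]
      · have e1 : z b k = 0 := by rw [hz]; simp [hb, vv, hk0, hk1]
        have e2 : z k k = 1 := by
          rw [hz1 k (fun h => hk1 (by rw [h, hb])), if_pos rfl]
        rw [e1, e2, mul_zero, mul_one, zero_add, hw]
        simp only [hk0, hk1, if_false]
      · intro j hj1 hjk
        rw [hz1 j hj1, if_neg (fun h => hjk h.symm), mul_zero]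

lemma sum_w_phi {n : ℕ} {l : ℝ} (hl0 : l ≠ 0) (x : E n) (a b : Fin n)
    (ha : (a : ℕ) = 0) (hb : (b : ℕ) = 1) :
    ∑ j : Fin n, (if (j : ℕ) = 0 then x a / l
        else if (j : ℕ) = 1 then x b - (1 - l) / l * x a else x j) = ∑ j, x j := by
  have hab : a ≠ b := Fin.ne_of_val_ne (by rw [ha, hb]; norm_num)
  have h := sum_support_pair (fun j => (if (j : ℕ) = 0 then x a / l
        else if (j : ℕ) = 1 then x b - (1 - l) / l * x a else x j) - x j) a b hab ?_
  · rw [Finset.sum_sub_distrib] at h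
    simp only [ha, hb] at h
    norm_num at h
    have hz : x a / l - x a + (x b - (1 - l) / l * x a - x b) = 0 := by
      field_simp
      ring
    linarith
  · intro j hj0 hj1
    have h0 : (j : ℕ) ≠ 0 := fun h => hj0 (Fin.ext (h.trans ha.symm))
    have h1 : (j : ℕ) ≠ 1 := fun h => hj1 (Fin.ext (h.trans hb.symm))
    simp only [h0, h1, if_false, sub_self]

lemma sum_w_psi {n : ℕ} {l : ℝ} (hl1 : (1:ℝ) - l ≠ 0) (x : E n) (a b : Fin n)
    (ha : (a : ℕ) = 0) (hb : (b : ℕ) = 1) :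
    ∑ j : Fin n, (if (j : ℕ) = 1 then x b / (1 - l)
        else if (j : ℕ) = 0 then x a - l / (1 - l) * x b else x j) = ∑ j, x j := by
  have hab : a ≠ b := Fin.ne_of_val_ne (by rw [ha, hb]; norm_num)
  have h := sum_support_pair (fun j => (if (j : ℕ) = 1 then x b / (1 - l)
        else if (j : ℕ) = 0 then x a - l / (1 - l) * x b else x j) - x j) a b hab ?_
  · rw [Finset.sum_sub_distrib] at h
    simp only [ha, hb] at h
    norm_num at h
    have hz : (x a - l / (1 - l) * x b - x a) + (x b / (1 - l) - x b) = 0 := by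
      field_simp
      ring
    linarith
  · intro j hj0 hj1
    have h0 : (j : ℕ) ≠ 0 := fun h => hj0 (Fin.ext (h.trans ha.symm))
    have h1 : (j : ℕ) ≠ 1 := fun h => hj1 (Fin.ext (h.trans hb.symm))
    simp only [h0, h1, if_false, sub_self]

/-- `φ₁, ψ₁ ∈ SL(n,ℝ)` and the triangulation of `T^i` by the
hyperplane `H` with normal `(1-λ)e₁ - λe₂`. -/
theorem triangulation_Ti {n : ℕ} (hn : 3 ≤ n) (l : ℝ) (hl0 : 0 < l) (hl1 : l < 1)
    (i : ℕ) (hi2 : 2 ≤ i) (hin : i < n) :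
    (phi1 n l).det = 1 ∧ (psi1 n l).det = 1
    ∧ Tk n i ∩ {x : E n | ⟪x, hNormal n l⟫ ≤ 0} = act (phi1 n l) '' Tk n i
    ∧ Tk n i ∩ {x : E n | 0 ≤ ⟪x, hNormal n l⟫} = act (psi1 n l) '' Tk n i
    ∧ Tk n i ∩ {x : E n | ⟪x, hNormal n l⟫ = 0} = act (phi1 n l) '' hatT n i := by
  have h0n : 0 < n := by omega
  have h1n : 1 < n := by omega
  have hl0' : l ≠ 0 := ne_of_gt hl0
  have hl1' : (1:ℝ) - l ≠ 0 := ne_of_gt (by linarith)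
  set a : Fin n := ⟨0, h0n⟩ with hadef
  set b : Fin n := ⟨1, h1n⟩ with hbdef
  have ha : (a : ℕ) = 0 := rfl
  have hb : (b : ℕ) = 1 := rfl
  have hab : a ≠ b := Fin.ne_of_val_ne (by rw [ha, hb]; norm_num)
  -- membership of the vertices in `Tk n i`
  have h0mem : (0 : E n) ∈ Tk n i := subset_convexHull ℝ _ (Or.inl rfl)
  have hemem : ∀ j : Fin n, (j : ℕ) < i → EuclideanSpace.single j 1 ∈ Tk n i :=
    fun j hj => subset_convexHull ℝ _ (Or.inr ⟨j, hj, rfl⟩)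
  have hvvmem : vv n l ∈ Tk n i := by
    rw [mem_Tk_iff]
    refine ⟨fun j => ?_, fun j hj => ?_, ?_⟩
    · simp only [vv]; split_ifs <;> linarith
    · simp only [vv]; rw [if_neg (by omega), if_neg (by omega)]
    · rw [sum_support_pair _ a b hab ?_]
      · simp only [vv, ha, hb]
        norm_num
      · intro j hj0 hj1
        have h0 : (j : ℕ) ≠ 0 := fun h => hj0 (Fin.ext (h.trans ha.symm))
        have h1 : (j : ℕ) ≠ 1 := fun h => hj1 (Fin.ext (h.trans hb.symm))
        simp only [vv, h0, h1, if_false]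
  -- images of the basis vectors
  have hphi0 : act (phi1 n l) (EuclideanSpace.single a 1) = vv n l := by
    ext k
    rw [act_single]
    simp only [phi1, Matrix.of_apply, ha, if_pos rfl]
    rfl
  have hphij : ∀ j : Fin n, (j : ℕ) ≠ 0 → (j : ℕ) ≠ n - 1 →
      act (phi1 n l) (EuclideanSpace.single j 1) = EuclideanSpace.single j 1 := by
    intro j hj0 hjn
    ext k
    rw [act_single, EuclideanSpace.single_apply]
    simp only [phi1, Matrix.of_apply]
    rw [if_neg hj0, if_neg hjn]
  have hpsi1 : act (psi1 n l) (EuclideanSpace.single b 1) = vv n l := by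
    ext k
    rw [act_single]
    simp only [psi1, Matrix.of_apply, hb, if_pos rfl]
    rfl
  have hpsij : ∀ j : Fin n, (j : ℕ) ≠ 1 → (j : ℕ) ≠ n - 1 →
      act (psi1 n l) (EuclideanSpace.single j 1) = EuclideanSpace.single j 1 := by
    intro j hj1 hjn
    ext k
    rw [act_single, EuclideanSpace.single_apply]
    simp only [psi1, Matrix.of_apply]
    rw [if_neg hj1, if_neg hjn]
  -- inner products of the vertices with the normal
  have hvva : vv n l a = l := by simp [vv, ha]
  have hvvb : vv n l b = 1 - l := by
    simp only [vv, hb]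
    norm_num
  have hivv : ⟪vv n l, hNormal n l⟫ = 0 := by
    rw [inner_hNormal l _ a b ha hb, hvva, hvvb]; ring
  have hsja : ∀ j : Fin n, (j : ℕ) ≠ 0 → EuclideanSpace.single j (1:ℝ) a = 0 := by
    intro j hj
    rw [EuclideanSpace.single_apply, if_neg (fun h => hj ((congrArg Fin.val h).symm.trans ha))]
  have hsjb : ∀ j : Fin n, (j : ℕ) ≠ 1 → EuclideanSpace.single j (1:ℝ) b = 0 := by
    intro j hj
    rw [EuclideanSpace.single_apply, if_neg (fun h => hj ((congrArg Fin.val h).symm.trans hb))]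
  have hiej : ∀ j : Fin n, (j : ℕ) ≠ 0 → (j : ℕ) ≠ 1 →
      ⟪EuclideanSpace.single j (1:ℝ), hNormal n l⟫ = 0 := by
    intro j hj0 hj1
    rw [inner_hNormal l _ a b ha hb, hsja j hj0, hsjb j hj1]; ring
  have hieb : ⟪EuclideanSpace.single b (1:ℝ), hNormal n l⟫ = -l := by
    rw [inner_hNormal l _ a b ha hb, hsja b (by rw [hb]; norm_num)]
    rw [EuclideanSpace.single_apply, if_pos rfl]; ring
  have hiea : ⟪EuclideanSpace.single a (1:ℝ), hNormal n l⟫ = 1 - l := by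
    rw [inner_hNormal l _ a b ha hb, hsjb a (by rw [ha]; norm_num)]
    rw [EuclideanSpace.single_apply, if_pos rfl]; ring
  have hlin : IsLinearMap ℝ (fun x : E n => ⟪x, hNormal n l⟫) :=
    ⟨fun u v => inner_add_left u v _, fun c u => by
      simpa using real_inner_smul_left u (hNormal n l) c⟩
  refine ⟨phi1_det hn l hl0', psi1_det hn l (by linarith), ?_, ?_, ?_⟩
  · -- part 3
    apply Set.Subset.antisymm
    · rintro x ⟨hxT, hxH⟩
      simp only [Set.mem_setOf_eq] at hxH
      rw [inner_hNormal l x a b ha hb] at hxH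
      obtain ⟨hpos, hzero, hsum⟩ := (mem_Tk_iff x).1 hxT
      rw [show Tk n i = convexHull ℝ ({0} ∪ (fun i' : Fin n =>
          EuclideanSpace.single i' (1 : ℝ)) '' {i' | (i' : ℕ) < i}) from rfl,
        LinearMap.image_convexHull]
      rw [decomp_phi hl0' x a b ha hb]
      refine mem_hull_of_sum ?_ _ _ ?_ ?_ ?_
      · exact ⟨0, Or.inl rfl, map_zero _⟩
      · intro j
        dsimp only
        split_ifs with h1 h2
        · exact div_nonneg (hpos a) hl0.le
        · rw [sub_nonneg, div_mul_eq_mul_div, div_le_iff₀ hl0]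
          nlinarith
        · exact hpos j
      · rw [sum_w_phi hl0' x a b ha hb]
        exact hsum
      · intro j hj
        dsimp only at hj ⊢
        by_cases h1 : (j : ℕ) = 0
        · rw [if_pos h1]
          exact ⟨_, Or.inr ⟨a, show (a : ℕ) < i by omega, rfl⟩, hphi0⟩
        · rw [if_neg h1]
          by_cases h2 : (j : ℕ) = 1
          · exact ⟨_, Or.inr ⟨j, show (j : ℕ) < i by omega, rfl⟩, hphij j h1 (by omega)⟩
          · have hji : (j : ℕ) < i := by
              by_contra hcon
              push_neg at hcon
              rw [if_neg h1, if_neg h2] at hj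
              exact hj (hzero j hcon)
            exact ⟨_, Or.inr ⟨j, hji, rfl⟩, hphij j h1 (by omega)⟩
    · rw [show act (phi1 n l) '' Tk n i = act (phi1 n l) '' convexHull ℝ ({0} ∪
          (fun i' : Fin n => EuclideanSpace.single i' (1 : ℝ)) '' {i' | (i' : ℕ) < i}) from rfl,
        LinearMap.image_convexHull]
      refine convexHull_min ?_ (Convex.inter (convex_convexHull ℝ _) (convex_halfSpace_le hlin 0))
      rintro y ⟨p, hp, rfl⟩
      rcases hp with rfl | ⟨j, hj, rfl⟩
      · rw [map_zero]
        exact ⟨h0mem, by simp only [Set.mem_setOf_eq, inner_zero_left]; exact le_refl 0⟩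
      · simp only [Set.mem_setOf_eq] at hj
        by_cases h1 : (j : ℕ) = 0
        · have hja : j = a := Fin.ext (h1.trans ha.symm)
          rw [hja]
          dsimp only
          rw [hphi0]
          exact ⟨hvvmem, le_of_eq hivv⟩
        · dsimp only
          rw [hphij j h1 (by omega)]
          refine ⟨hemem j hj, ?_⟩
          simp only [Set.mem_setOf_eq]
          by_cases h2 : (j : ℕ) = 1
          · have hjb : j = b := Fin.ext (h2.trans hb.symm)
            rw [hjb, hieb]
            linarith
          · rw [hiej j h1 h2]
  · -- part 4
    apply Set.Subset.antisymm
    · rintro x ⟨hxT, hxH⟩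
      simp only [Set.mem_setOf_eq] at hxH
      rw [inner_hNormal l x a b ha hb] at hxH
      obtain ⟨hpos, hzero, hsum⟩ := (mem_Tk_iff x).1 hxT
      rw [show Tk n i = convexHull ℝ ({0} ∪ (fun i' : Fin n =>
          EuclideanSpace.single i' (1 : ℝ)) '' {i' | (i' : ℕ) < i}) from rfl,
        LinearMap.image_convexHull]
      rw [decomp_psi hl1' x a b ha hb]
      refine mem_hull_of_sum ?_ _ _ ?_ ?_ ?_
      · exact ⟨0, Or.inl rfl, map_zero _⟩
      · intro j
        dsimp only
        split_ifs with h1 h2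
        · exact div_nonneg (hpos b) (by linarith)
        · rw [sub_nonneg, div_mul_eq_mul_div, div_le_iff₀ (by linarith : (0:ℝ) < 1 - l)]
          nlinarith
        · exact hpos j
      · rw [sum_w_psi hl1' x a b ha hb]
        exact hsum
      · intro j hj
        dsimp only at hj ⊢
        by_cases h1 : (j : ℕ) = 1
        · rw [if_pos h1]
          exact ⟨_, Or.inr ⟨b, show (b : ℕ) < i by omega, rfl⟩, hpsi1⟩
        · rw [if_neg h1]
          by_cases h2 : (j : ℕ) = 0
          · exact ⟨_, Or.inr ⟨j, show (j : ℕ) < i by omega, rfl⟩, hpsij j h1 (by omega)⟩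
          · have hji : (j : ℕ) < i := by
              by_contra hcon
              push_neg at hcon
              rw [if_neg h1, if_neg h2] at hj
              exact hj (hzero j hcon)
            exact ⟨_, Or.inr ⟨j, hji, rfl⟩, hpsij j h1 (by omega)⟩
    · rw [show act (psi1 n l) '' Tk n i = act (psi1 n l) '' convexHull ℝ ({0} ∪
          (fun i' : Fin n => EuclideanSpace.single i' (1 : ℝ)) '' {i' | (i' : ℕ) < i}) from rfl,
        LinearMap.image_convexHull]
      refine convexHull_min ?_ (Convex.inter (convex_convexHull ℝ _) (convex_halfSpace_ge hlin 0))
      rintro y ⟨p, hp, rfl⟩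
      rcases hp with rfl | ⟨j, hj, rfl⟩
      · rw [map_zero]
        exact ⟨h0mem, by simp only [Set.mem_setOf_eq, inner_zero_left]; exact le_refl 0⟩
      · simp only [Set.mem_setOf_eq] at hj
        by_cases h1 : (j : ℕ) = 1
        · have hjb : j = b := Fin.ext (h1.trans hb.symm)
          rw [hjb]
          dsimp only
          rw [hpsi1]
          exact ⟨hvvmem, le_of_eq hivv.symm⟩
        · dsimp only
          rw [hpsij j h1 (by omega)]
          refine ⟨hemem j hj, ?_⟩
          simp only [Set.mem_setOf_eq]
          by_cases h2 : (j : ℕ) = 0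
          · have hja : j = a := Fin.ext (h2.trans ha.symm)
            rw [hja, hiea]
            linarith
          · rw [hiej j h2 h1]
  · -- part 5
    apply Set.Subset.antisymm
    · rintro x ⟨hxT, hxH⟩
      simp only [Set.mem_setOf_eq] at hxH
      rw [inner_hNormal l x a b ha hb] at hxH
      have hxH' : (1 - l) * x a = l * x b := by linarith
      have hwb0 : x b - (1 - l) / l * x a = 0 := by
        have : (1 - l) / l * x a = x b := by
          rw [div_mul_eq_mul_div, div_eq_iff hl0']
          linarith [mul_comm l (x b)]
        linarith
      obtain ⟨hpos, hzero, hsum⟩ := (mem_Tk_iff x).1 hxT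
      rw [show hatT n i = convexHull ℝ ({0} ∪ (fun j : Fin n =>
          EuclideanSpace.single j (1 : ℝ)) ''
          {j | (j : ℕ) = 0 ∨ (2 ≤ (j : ℕ) ∧ (j : ℕ) < i)}) from rfl,
        LinearMap.image_convexHull]
      rw [decomp_phi hl0' x a b ha hb]
      refine mem_hull_of_sum ?_ _ _ ?_ ?_ ?_
      · exact ⟨0, Or.inl rfl, map_zero _⟩
      · intro j
        dsimp only
        split_ifs with h1 h2
        · exact div_nonneg (hpos a) hl0.le
        · exact le_of_eq hwb0.symm
        · exact hpos j
      · rw [sum_w_phi hl0' x a b ha hb]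
        exact hsum
      · intro j hj
        dsimp only at hj ⊢
        by_cases h1 : (j : ℕ) = 0
        · rw [if_pos h1]
          exact ⟨_, Or.inr ⟨a, Or.inl ha, rfl⟩, hphi0⟩
        · rw [if_neg h1]
          by_cases h2 : (j : ℕ) = 1
          · rw [if_neg h1, if_pos h2] at hj
            exact absurd hwb0 hj
          · have hji : (j : ℕ) < i := by
              by_contra hcon
              push_neg at hcon
              rw [if_neg h1, if_neg h2] at hj
              exact hj (hzero j hcon)
            exact ⟨_, Or.inr ⟨j, Or.inr ⟨by omega, hji⟩, rfl⟩, hphij j h1 (by omega)⟩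
    · rw [show act (phi1 n l) '' hatT n i = act (phi1 n l) '' convexHull ℝ ({0} ∪
          (fun j : Fin n => EuclideanSpace.single j (1 : ℝ)) ''
          {j | (j : ℕ) = 0 ∨ (2 ≤ (j : ℕ) ∧ (j : ℕ) < i)}) from rfl,
        LinearMap.image_convexHull]
      refine convexHull_min ?_ (Convex.inter (convex_convexHull ℝ _) (convex_hyperplane hlin 0))
      rintro y ⟨p, hp, rfl⟩
      rcases hp with rfl | ⟨j, hj, rfl⟩
      · rw [map_zero]
        exact ⟨h0mem, by simp only [Set.mem_setOf_eq, inner_zero_left]⟩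
      · simp only [Set.mem_setOf_eq] at hj
        rcases hj with h1 | ⟨h2, h3⟩
        · have hja : j = a := Fin.ext (h1.trans ha.symm)
          rw [hja]
          dsimp only
          rw [hphi0]
          exact ⟨hvvmem, hivv⟩
        · dsimp only
          rw [hphij j (by omega) (by omega)]
          exact ⟨hemem j h3, hiej j (by omega) (by omega)⟩
end
end

section
/- For λ ∈ (0,1) and s > 0, let φ₂ be defined by φ₂e₁ = λe₁ + (1−λ)e₂ and φ₂e_j = e_j for j ≠ 1, and ψ₂ by ψ₂e₂ = λe₁ + (1−λ)e₂ and ψ₂e_j = e_j for j ≠ 2. Then det φ₂ = λ, det ψ₂ = 1−λ, and with H the hyperplane through 0 with normal (1−λ)e₁ − λe₂: sTⁿ ∩ H⁺ = ψ₂(sTⁿ), sTⁿ ∩ H⁻ = φ₂(sTⁿ), and sTⁿ ∩ H = φ₂(s·conv{0, e₁, e₃, …, eₙ}). -/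
open scoped RealInnerProductSpace Pointwise

noncomputable section

/-- The matrix `φ₂`: `e₁ ↦ λe₁ + (1-λ)e₂`, `e_j ↦ e_j` otherwise. -/
def phi2 (n : ℕ) (l : ℝ) : Matrix (Fin n) (Fin n) ℝ :=
  Matrix.of fun i j =>
    if (j : ℕ) = 0 then (if (i : ℕ) = 0 then l else if (i : ℕ) = 1 then 1 - l else 0)
    else (if i = j then 1 else 0)

/-- The matrix `ψ₂`: `e₂ ↦ λe₁ + (1-λ)e₂`, `e_j ↦ e_j` otherwise. -/
def psi2 (n : ℕ) (l : ℝ) : Matrix (Fin n) (Fin n) ℝ :=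
  Matrix.of fun i j =>
    if (j : ℕ) = 1 then (if (i : ℕ) = 0 then l else if (i : ℕ) = 1 then 1 - l else 0)
    else (if i = j then 1 else 0)

/-! ### Auxiliary lemmas -/

lemma sum_single_eq' (n : ℕ) (x : E n) : ∑ i, EuclideanSpace.single i (x i) = x := by
  ext j
  have : (∑ i, EuclideanSpace.single i (x i)) j = ∑ i, (EuclideanSpace.single i (x i) : E n) j :=
    by rw [WithLp.ofLp_sum]; exact Finset.sum_apply j Finset.univ _
  rw [this]
  simp [EuclideanSpace.single_apply]

lemma corner_mem (n : ℕ) (S : Set (Fin n)) (x : E n) :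
    x ∈ convexHull ℝ ({0} ∪ (fun i : Fin n => EuclideanSpace.single i (1 : ℝ)) '' S) ↔
    (∀ i, 0 ≤ x i) ∧ ∑ i, x i ≤ 1 ∧ ∀ i ∉ S, x i = 0 := by
  classical
  constructor
  · intro hx
    have : convexHull ℝ ({0} ∪ (fun i : Fin n => EuclideanSpace.single i (1 : ℝ)) '' S) ⊆
        {x : E n | (∀ i, 0 ≤ x i) ∧ ∑ i, x i ≤ 1 ∧ ∀ i ∉ S, x i = 0} := by
      apply convexHull_min
      · intro y hy
        simp only [Set.mem_union, Set.mem_singleton_iff, Set.mem_image, Set.mem_setOf_eq] at hy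
        rcases hy with hy | ⟨i, hi, rfl⟩
        · subst hy
          exact ⟨fun i => le_refl _, by simp, fun i _ => rfl⟩
        · refine ⟨fun j => ?_, ?_, fun j hj => ?_⟩
          · simp [EuclideanSpace.single_apply]
            split <;> norm_num
          · simp [EuclideanSpace.single_apply]
          · simp [EuclideanSpace.single_apply]
            intro h; exact absurd (h ▸ hi) hj
      · rintro a ⟨ha1, ha2, ha3⟩ b ⟨hb1, hb2, hb3⟩ p q hp hq hpq
        refine ⟨fun i => ?_, ?_, fun i hi => ?_⟩
        · have : (p • a + q • b) i = p * a i + q * b i := rfl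
          rw [this]
          exact add_nonneg (mul_nonneg hp (ha1 i)) (mul_nonneg hq (hb1 i))
        · have : ∀ i, (p • a + q • b) i = p * a i + q * b i := fun _ => rfl
          simp only [this, Finset.sum_add_distrib, ← Finset.mul_sum]
          have t1 := mul_le_mul_of_nonneg_left ha2 hp
          have t2 := mul_le_mul_of_nonneg_left hb2 hq
          linarith
        · have : (p • a + q • b) i = p * a i + q * b i := rfl
          rw [this, ha3 i hi, hb3 i hi]; ring
    exact this hx
  · rintro ⟨h1, h2, h3⟩
    have key : x = ∑ i, x i • (if i ∈ S then EuclideanSpace.single i (1:ℝ) else 0) := by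
      have : ∀ i, x i • (if i ∈ S then EuclideanSpace.single i (1:ℝ) else 0)
          = EuclideanSpace.single i (x i) := by
        intro i
        by_cases hi : i ∈ S
        · rw [if_pos hi]; ext j; simp [EuclideanSpace.single_apply, mul_ite]
        · rw [if_neg hi, smul_zero, h3 i hi]
          ext j; simp [EuclideanSpace.single_apply]
      rw [Finset.sum_congr rfl fun i _ => this i, sum_single_eq']
    have := Convex.sum_mem (t := (Finset.univ : Finset (Option (Fin n))))
      (convex_convexHull ℝ ({0} ∪ (fun i : Fin n => EuclideanSpace.single i (1 : ℝ)) '' S))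
      (w := fun o => Option.elim o (1 - ∑ i, x i) x)
      (z := fun o => Option.elim o 0 (fun i => if i ∈ S then EuclideanSpace.single i (1:ℝ) else 0))
      ?_ ?_ ?_
    · convert this using 1
      rw [Fintype.sum_option]
      simp only [Option.elim]
      rw [smul_zero, zero_add]
      exact key
    · rintro (_ | i) _
      · simpa using h2
      · exact h1 i
    · rw [Fintype.sum_option]; simp
    · rintro (_ | i) _
      · exact subset_convexHull ℝ _ (Or.inl rfl)
      · by_cases hi : i ∈ S
        · simp only [Option.elim, if_pos hi]
          exact subset_convexHull ℝ _ (Or.inr ⟨i, hi, rfl⟩)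
        · simp only [Option.elim, if_neg hi]
          exact subset_convexHull ℝ _ (Or.inl rfl)

lemma smul_corner_mem (n : ℕ) (S : Set (Fin n)) {s : ℝ} (hs : 0 < s) (x : E n) :
    x ∈ s • convexHull ℝ ({0} ∪ (fun i : Fin n => EuclideanSpace.single i (1 : ℝ)) '' S) ↔
    (∀ i, 0 ≤ x i) ∧ ∑ i, x i ≤ s ∧ ∀ i ∉ S, x i = 0 := by
  rw [Set.mem_smul_set_iff_inv_smul_mem₀ hs.ne', corner_mem]
  have hap : ∀ i, (s⁻¹ • x) i = s⁻¹ * x i := fun _ => rfl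
  simp only [hap]
  constructor
  · rintro ⟨h1, h2, h3⟩
    refine ⟨fun i => ?_, ?_, fun i hi => ?_⟩
    · have := h1 i; nlinarith [inv_pos.2 hs]
    · rw [← Finset.mul_sum] at h2
      calc ∑ i, x i = s * (s⁻¹ * ∑ i, x i) := by field_simp
        _ ≤ s * 1 := by exact mul_le_mul_of_nonneg_left h2 hs.le
        _ = s := mul_one s
    · have := h3 i hi
      field_simp at this
      simpa using this
  · rintro ⟨h1, h2, h3⟩
    refine ⟨fun i => mul_nonneg (inv_pos.2 hs).le (h1 i), ?_,
      fun i hi => by rw [h3 i hi, mul_zero]⟩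
    rw [← Finset.mul_sum]
    calc s⁻¹ * ∑ i, x i ≤ s⁻¹ * s := mul_le_mul_of_nonneg_left h2 (inv_pos.2 hs).le
      _ = 1 := inv_mul_cancel₀ hs.ne'

lemma mem_sTk (m : ℕ) {s : ℝ} (hs : 0 < s) (x : E (m+2)) :
    x ∈ s • Tk (m+2) (m+2) ↔ (∀ i, 0 ≤ x i) ∧ ∑ i, x i ≤ s := by
  rw [Tk, smul_corner_mem _ _ hs]
  simp [Fin.is_lt]

lemma mem_shatT (m : ℕ) {s : ℝ} (hs : 0 < s) (x : E (m+2)) :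
    x ∈ s • hatT (m+2) (m+2) ↔ (∀ i, 0 ≤ x i) ∧ ∑ i, x i ≤ s ∧ x 1 = 0 := by
  rw [hatT, smul_corner_mem _ _ hs]
  refine and_congr_right fun _ => and_congr_right fun _ => ?_
  constructor
  · intro h
    refine h 1 ?_
    simp
  · intro h i hi
    simp only [Set.mem_setOf_eq, not_or, not_and, not_lt] at hi
    have h2 : (i : ℕ) = 1 := by omega
    have : i = 1 := by
      apply Fin.ext; simpa using h2
    rwa [this]

lemma inner_hNormal_s16 (m : ℕ) (l : ℝ) (x : E (m+2)) :
    ⟪x, hNormal (m+2) l⟫ = (1 - l) * x 0 - l * x 1 := by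
  simp only [PiLp.inner_apply, RCLike.inner_apply, conj_trivial]
  rw [Fin.sum_univ_succ, Fin.sum_univ_succ]
  simp [hNormal]
  ring

lemma act_apply {n : ℕ} (M : Matrix (Fin n) (Fin n) ℝ) (y : E n) (i : Fin n) :
    act M y i = ∑ j, M i j * y j := by
  simp [act, Matrix.toEuclideanLin_apply, Matrix.mulVec, dotProduct]

lemma psi_app0 (m : ℕ) (l : ℝ) (y : E (m + 2)) :
    act (psi2 (m+2) l) y 0 = y 0 + l * y 1 := by
  rw [act_apply, Fin.sum_univ_succ, Fin.sum_univ_succ]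
  simp [psi2, Fin.ext_iff, -Fin.val_eq_zero_iff]

lemma psi_app1 (m : ℕ) (l : ℝ) (y : E (m + 2)) :
    act (psi2 (m+2) l) y 1 = (1 - l) * y 1 := by
  rw [act_apply, Fin.sum_univ_succ, Fin.sum_univ_succ]
  simp [psi2, Fin.ext_iff, -Fin.val_eq_zero_iff]

lemma psi_appss (m : ℕ) (l : ℝ) (y : E (m + 2)) (i : Fin m) :
    act (psi2 (m+2) l) y i.succ.succ = y i.succ.succ := by
  rw [act_apply, Fin.sum_univ_succ, Fin.sum_univ_succ]
  have h2 : ∀ j : Fin m, psi2 (m+2) l i.succ.succ j.succ.succ = if i = j then 1 else 0 := by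
    intro j
    by_cases h : i = j
    · subst h; simp [psi2, Fin.ext_iff, -Fin.val_eq_zero_iff]
    · simp [psi2, Fin.ext_iff, -Fin.val_eq_zero_iff, h]
      omega
  have e0 : psi2 (m+2) l i.succ.succ 0 = 0 := by simp [psi2, Fin.ext_iff, -Fin.val_eq_zero_iff]
  have e1 : psi2 (m+2) l i.succ.succ (1 : Fin (m+2)) = 0 := by
    simp [psi2, Fin.ext_iff, -Fin.val_eq_zero_iff]
  simp [e0, e1, h2, Finset.sum_ite_eq]

lemma phi_app0 (m : ℕ) (l : ℝ) (y : E (m + 2)) :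
    act (phi2 (m+2) l) y 0 = l * y 0 := by
  rw [act_apply, Fin.sum_univ_succ, Fin.sum_univ_succ]
  simp [phi2, Fin.ext_iff, -Fin.val_eq_zero_iff]

lemma phi_app1 (m : ℕ) (l : ℝ) (y : E (m + 2)) :
    act (phi2 (m+2) l) y 1 = (1 - l) * y 0 + y 1 := by
  rw [act_apply, Fin.sum_univ_succ, Fin.sum_univ_succ]
  simp [phi2, Fin.ext_iff, -Fin.val_eq_zero_iff]

lemma phi_appss (m : ℕ) (l : ℝ) (y : E (m + 2)) (i : Fin m) :
    act (phi2 (m+2) l) y i.succ.succ = y i.succ.succ := by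
  rw [act_apply, Fin.sum_univ_succ, Fin.sum_univ_succ]
  have h2 : ∀ j : Fin m, phi2 (m+2) l i.succ.succ j.succ.succ = if i = j then 1 else 0 := by
    intro j
    by_cases h : i = j
    · subst h; simp [phi2, Fin.ext_iff, -Fin.val_eq_zero_iff]
    · simp [phi2, Fin.ext_iff, -Fin.val_eq_zero_iff, h]
      omega
  have e0 : phi2 (m+2) l i.succ.succ 0 = 0 := by simp [phi2, Fin.ext_iff, -Fin.val_eq_zero_iff]
  have e1 : phi2 (m+2) l i.succ.succ (1 : Fin (m+2)) = 0 := by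
    simp [phi2, Fin.ext_iff, -Fin.val_eq_zero_iff]
  simp [e0, e1, h2, Finset.sum_ite_eq]

lemma det_phi (m : ℕ) (l : ℝ) : (phi2 (m+2) l).det = l := by
  rw [Matrix.det_of_lowerTriangular]
  · rw [Fin.prod_univ_succ]
    have h0 : phi2 (m+2) l 0 0 = l := by simp [phi2]
    have hs : ∀ i : Fin (m+1), phi2 (m+2) l i.succ i.succ = 1 := by
      intro i; simp [phi2, Fin.ext_iff, -Fin.val_eq_zero_iff]
    rw [h0]
    simp [hs]
  · intro i j hij
    have hv : (i : ℕ) < (j : ℕ) := hij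
    simp only [phi2, Matrix.of_apply]
    rw [if_neg (by omega), if_neg (Fin.ne_of_val_ne (by omega))]

lemma det_psi (m : ℕ) (l : ℝ) : (psi2 (m+2) l).det = 1 - l := by
  rw [Matrix.det_of_upperTriangular]
  · have key : ∀ i : Fin (m+2), psi2 (m+2) l i i = if (i:ℕ) = 1 then 1 - l else 1 := by
      intro i
      by_cases h : (i:ℕ) = 1 <;> simp [psi2, h, Fin.ext_iff, -Fin.val_eq_zero_iff]
    calc ∏ i, psi2 (m+2) l i i = ∏ i : Fin (m+2), if (i:ℕ) = 1 then 1 - l else 1 :=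
          Finset.prod_congr rfl fun i _ => key i
      _ = 1 - l := by
          rw [Fin.prod_univ_succ, Fin.prod_univ_succ]
          simp
  · intro i j hij
    have hv : (j : ℕ) < (i : ℕ) := hij
    simp only [psi2, Matrix.of_apply]
    by_cases h : (j:ℕ) = 1
    · rw [if_pos h, if_neg (by omega), if_neg (by omega)]
    · rw [if_neg h, if_neg (Fin.ne_of_val_ne (by omega))]

lemma fin2cases {m : ℕ} (P : Fin (m+2) → Prop) (h0 : P 0) (h1 : P 1)
    (hss : ∀ i : Fin m, P i.succ.succ) : ∀ i, P i := by
  intro i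
  induction i using Fin.cases with
  | zero => exact h0
  | succ j =>
    induction j using Fin.cases with
    | zero => simpa [Fin.succ_zero_eq_one] using h1
    | succ k => exact hss k

lemma sum_fin_two (m : ℕ) (f : Fin (m+2) → ℝ) :
    ∑ i, f i = f 0 + f 1 + ∑ i : Fin m, f i.succ.succ := by
  rw [Fin.sum_univ_succ, Fin.sum_univ_succ, Fin.succ_zero_eq_one, ← add_assoc]

lemma adj0 (m : ℕ) (x : E (m+2)) (a b : ℝ) :
    (x + a • EuclideanSpace.single (0 : Fin (m+2)) (1:ℝ)
      + b • EuclideanSpace.single (1 : Fin (m+2)) (1:ℝ)) 0 = x 0 + a := by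
  have : (x + a • EuclideanSpace.single (0 : Fin (m+2)) (1:ℝ)
      + b • EuclideanSpace.single (1 : Fin (m+2)) (1:ℝ)) 0
      = x 0 + a * (EuclideanSpace.single (0 : Fin (m+2)) (1:ℝ) : E (m+2)) 0
        + b * (EuclideanSpace.single (1 : Fin (m+2)) (1:ℝ) : E (m+2)) 0 := rfl
  rw [this]
  simp [EuclideanSpace.single_apply, Fin.ext_iff]

lemma adj1 (m : ℕ) (x : E (m+2)) (a b : ℝ) :
    (x + a • EuclideanSpace.single (0 : Fin (m+2)) (1:ℝ)
      + b • EuclideanSpace.single (1 : Fin (m+2)) (1:ℝ)) 1 = x 1 + b := by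
  have : (x + a • EuclideanSpace.single (0 : Fin (m+2)) (1:ℝ)
      + b • EuclideanSpace.single (1 : Fin (m+2)) (1:ℝ)) 1
      = x 1 + a * (EuclideanSpace.single (0 : Fin (m+2)) (1:ℝ) : E (m+2)) 1
        + b * (EuclideanSpace.single (1 : Fin (m+2)) (1:ℝ) : E (m+2)) 1 := rfl
  rw [this]
  simp [EuclideanSpace.single_apply, Fin.ext_iff]

lemma adjss (m : ℕ) (x : E (m+2)) (a b : ℝ) (i : Fin m) :
    (x + a • EuclideanSpace.single (0 : Fin (m+2)) (1:ℝ)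
      + b • EuclideanSpace.single (1 : Fin (m+2)) (1:ℝ)) i.succ.succ = x i.succ.succ := by
  have : (x + a • EuclideanSpace.single (0 : Fin (m+2)) (1:ℝ)
      + b • EuclideanSpace.single (1 : Fin (m+2)) (1:ℝ)) i.succ.succ
      = x i.succ.succ + a * (EuclideanSpace.single (0 : Fin (m+2)) (1:ℝ) : E (m+2)) i.succ.succ
        + b * (EuclideanSpace.single (1 : Fin (m+2)) (1:ℝ) : E (m+2)) i.succ.succ := rfl
  rw [this]
  simp [EuclideanSpace.single_apply, Fin.ext_iff]

/-- determinants of `φ₂, ψ₂` and the triangulation of `sTⁿ` by the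
hyperplane `H` with normal `(1-λ)e₁ - λe₂`. -/
theorem triangulation_sTn {n : ℕ} (hn : 2 ≤ n) (l : ℝ) (hl0 : 0 < l) (hl1 : l < 1)
    (s : ℝ) (hs : 0 < s) :
    (phi2 n l).det = l ∧ (psi2 n l).det = 1 - l
    ∧ (s • Tk n n) ∩ {x : E n | 0 ≤ ⟪x, hNormal n l⟫} = act (psi2 n l) '' (s • Tk n n)
    ∧ (s • Tk n n) ∩ {x : E n | ⟪x, hNormal n l⟫ ≤ 0} = act (phi2 n l) '' (s • Tk n n)
    ∧ (s • Tk n n) ∩ {x : E n | ⟪x, hNormal n l⟫ = 0} = act (phi2 n l) '' (s • hatT n n) := by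
  obtain ⟨m, rfl⟩ : ∃ m, n = m + 2 := ⟨n - 2, by omega⟩
  have hl1' : (0:ℝ) < 1 - l := by linarith
  have hne : (1:ℝ) - l ≠ 0 := hl1'.ne'
  have hlne : l ≠ 0 := hl0.ne'
  refine ⟨det_phi m l, det_psi m l, ?_, ?_, ?_⟩
  · -- H⁺ : psi image
    ext x
    rw [Set.mem_inter_iff, mem_sTk m hs, Set.mem_setOf_eq, inner_hNormal_s16, Set.mem_image]
    constructor
    · rintro ⟨⟨h1, h2⟩, hin⟩
      obtain ⟨b, hb⟩ : ∃ b : ℝ, b = l * x 1 / (1 - l) := ⟨_, rfl⟩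
      have hbn : 0 ≤ b := hb ▸ div_nonneg (mul_nonneg hl0.le (h1 1)) hl1'.le
      have hb0 : b ≤ x 0 := by rw [hb, div_le_iff₀ hl1']; nlinarith
      refine ⟨x + (-b) • EuclideanSpace.single (0 : Fin (m+2)) (1:ℝ)
        + b • EuclideanSpace.single (1 : Fin (m+2)) (1:ℝ), ?_, ?_⟩
      · rw [mem_sTk m hs]
        constructor
        · refine fin2cases _ ?_ ?_ fun i => ?_
          · rw [adj0]; linarith
          · rw [adj1]; have := h1 1; linarith
          · rw [adjss]; exact h1 _
        · rw [sum_fin_two, adj0, adj1, Finset.sum_congr rfl fun i _ => adjss m x (-b) b i]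
          rw [sum_fin_two m (fun i => x i)] at h2
          linarith
      · refine PiLp.ext (fin2cases _ ?_ ?_ fun i => ?_)
        · rw [psi_app0, adj0, adj1, hb]
          field_simp
          ring
        · rw [psi_app1, adj1, hb]
          field_simp
          ring
        · rw [psi_appss, adjss]
    · rintro ⟨y, hy, rfl⟩
      rw [mem_sTk m hs] at hy
      obtain ⟨h1, h2⟩ := hy
      rw [sum_fin_two m (fun i => y i)] at h2
      refine ⟨⟨fin2cases _ ?_ ?_ fun i => ?_, ?_⟩, ?_⟩
      · rw [psi_app0]; nlinarith [h1 0, h1 1]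
      · rw [psi_app1]; nlinarith [h1 1]
      · rw [psi_appss]; exact h1 _
      · rw [sum_fin_two, psi_app0, psi_app1,
          Finset.sum_congr rfl fun i (_ : i ∈ Finset.univ) => psi_appss m l y i]
        linarith
      · rw [psi_app0, psi_app1]; nlinarith [h1 0]
  · -- H⁻ : phi image
    ext x
    rw [Set.mem_inter_iff, mem_sTk m hs, Set.mem_setOf_eq, inner_hNormal_s16, Set.mem_image]
    constructor
    · rintro ⟨⟨h1, h2⟩, hin⟩
      obtain ⟨a, ha⟩ : ∃ a : ℝ, a = (1 - l) * x 0 / l := ⟨_, rfl⟩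
      have han : 0 ≤ a := ha ▸ div_nonneg (mul_nonneg hl1'.le (h1 0)) hl0.le
      have ha1 : a ≤ x 1 := by rw [ha, div_le_iff₀ hl0]; nlinarith
      refine ⟨x + a • EuclideanSpace.single (0 : Fin (m+2)) (1:ℝ)
        + (-a) • EuclideanSpace.single (1 : Fin (m+2)) (1:ℝ), ?_, ?_⟩
      · rw [mem_sTk m hs]
        constructor
        · refine fin2cases _ ?_ ?_ fun i => ?_
          · rw [adj0]; have := h1 0; linarith
          · rw [adj1]; linarith
          · rw [adjss]; exact h1 _
        · rw [sum_fin_two, adj0, adj1, Finset.sum_congr rfl fun i _ => adjss m x a (-a) i]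
          rw [sum_fin_two m (fun i => x i)] at h2
          linarith
      · refine PiLp.ext (fin2cases _ ?_ ?_ fun i => ?_)
        · rw [phi_app0, adj0, ha]
          field_simp
          ring
        · rw [phi_app1, adj0, adj1, ha]
          field_simp
          ring
        · rw [phi_appss, adjss]
    · rintro ⟨y, hy, rfl⟩
      rw [mem_sTk m hs] at hy
      obtain ⟨h1, h2⟩ := hy
      rw [sum_fin_two m (fun i => y i)] at h2
      refine ⟨⟨fin2cases _ ?_ ?_ fun i => ?_, ?_⟩, ?_⟩
      · rw [phi_app0]; nlinarith [h1 0]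
      · rw [phi_app1]; nlinarith [h1 0, h1 1]
      · rw [phi_appss]; exact h1 _
      · rw [sum_fin_two, phi_app0, phi_app1,
          Finset.sum_congr rfl fun i (_ : i ∈ Finset.univ) => phi_appss m l y i]
        linarith
      · rw [phi_app0, phi_app1]; nlinarith [h1 1]
  · -- H : phi image of hatT
    ext x
    rw [Set.mem_inter_iff, mem_sTk m hs, Set.mem_setOf_eq, inner_hNormal_s16, Set.mem_image]
    constructor
    · rintro ⟨⟨h1, h2⟩, hin⟩
      obtain ⟨a, ha⟩ : ∃ a : ℝ, a = (1 - l) * x 0 / l := ⟨_, rfl⟩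
      have han : 0 ≤ a := ha ▸ div_nonneg (mul_nonneg hl1'.le (h1 0)) hl0.le
      have hax : a = x 1 := by rw [ha]; field_simp; nlinarith
      refine ⟨x + a • EuclideanSpace.single (0 : Fin (m+2)) (1:ℝ)
        + (-(x 1)) • EuclideanSpace.single (1 : Fin (m+2)) (1:ℝ), ?_, ?_⟩
      · rw [mem_shatT m hs]
        refine ⟨fin2cases _ ?_ ?_ fun i => ?_, ?_, ?_⟩
        · rw [adj0]; have := h1 0; linarith
        · rw [adj1]; linarith
        · rw [adjss]; exact h1 _
        · rw [sum_fin_two, adj0, adj1,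
            Finset.sum_congr rfl fun i _ => adjss m x a (-(x 1)) i]
          rw [sum_fin_two m (fun i => x i)] at h2
          linarith
        · rw [adj1]; ring
      · refine PiLp.ext (fin2cases _ ?_ ?_ fun i => ?_)
        · rw [phi_app0, adj0, ha]
          field_simp
          ring
        · rw [phi_app1, adj0, adj1, ha]
          field_simp
          nlinarith [hin]
        · rw [phi_appss, adjss]
    · rintro ⟨y, hy, rfl⟩
      rw [mem_shatT m hs] at hy
      obtain ⟨h1, h2, h3⟩ := hy
      rw [sum_fin_two m (fun i => y i)] at h2
      refine ⟨⟨fin2cases _ ?_ ?_ fun i => ?_, ?_⟩, ?_⟩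
      · rw [phi_app0]; nlinarith [h1 0]
      · rw [phi_app1]; nlinarith [h1 0, h1 1]
      · rw [phi_appss]; exact h1 _
      · rw [sum_fin_two, phi_app0, phi_app1,
          Finset.sum_congr rfl fun i (_ : i ∈ Finset.univ) => phi_appss m l y i]
        linarith
      · rw [phi_app0, phi_app1, h3]; ring
end
end

section
/- Let P, Q be convex polytopes in ℝⁿ with P ∪ Q convex. Then conv{0, P∪Q} = conv{0,P} ∪ conv{0,Q} and conv{0, P∩Q} = conv{0,P} ∩ conv{0,Q}. Consequently, if Z is any valuation on polytopes containing the origin, then P ↦ Z(conv{0,P}) is a valuation on all polytopes. -/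
open scoped RealInnerProductSpace

noncomputable section

set_option maxHeartbeats 1000000

section Statement18Aux

open Set

variable {n : ℕ}

lemma seg_zero_mem {z x : E n} :
    x ∈ segment ℝ (0 : E n) z ↔ ∃ t : ℝ, 0 ≤ t ∧ t ≤ 1 ∧ x = t • z := by
  constructor
  · rintro ⟨a, b, ha, hb, hab, h⟩
    exact ⟨b, hb, by linarith, by rw [← h]; simp⟩
  · rintro ⟨t, h0, h1, rfl⟩
    exact ⟨1 - t, t, by linarith, h0, by ring, by simp⟩

lemma cone_mem {C : Set (E n)} (hC : Convex ℝ C) (hne : C.Nonempty) {x : E n} :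
    x ∈ convexHull ℝ ({0} ∪ C) ↔ ∃ z ∈ C, x ∈ segment ℝ (0 : E n) z := by
  rw [Set.singleton_union, convexHull_insert hne, hC.convexHull_eq, mem_convexJoin]
  simp

lemma seg_meet {K L : Set (E n)} (hKc : IsClosed K) (hLc : IsClosed L) {p q : E n}
    (hseg : segment ℝ p q ⊆ K ∪ L) (hp : p ∈ K) (hq : q ∈ L) :
    ∃ r ∈ segment ℝ p q, r ∈ K ∧ r ∈ L := by
  obtain ⟨r, hr⟩ := isPreconnected_closed_iff.1 (convex_segment p q).isPreconnected K L hKc hLc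
    hseg ⟨p, left_mem_segment ℝ p q, hp⟩ ⟨q, right_mem_segment ℝ p q, hq⟩
  exact ⟨r, hr.1, hr.2⟩

lemma exists_symm_pair {C : Set (E n)} (hC : Convex ℝ C) {x : E n} (hx : x ∈ C)
    (hne : x ∉ C.extremePoints ℝ) : ∃ u : E n, u ≠ 0 ∧ x + u ∈ C ∧ x - u ∈ C := by
  rw [mem_extremePoints] at hne
  push_neg at hne
  obtain ⟨y, hy, z, hz, hseg, hyz⟩ := hne hx
  obtain ⟨a, b, ha, hb, hab, habx⟩ := hseg
  have hzy : z ≠ y := by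
    rintro rfl
    have hx' : z = x := by
      rw [← habx, ← add_smul, hab, one_smul]
    exact hyz hx' hx'
  refine ⟨(min a b) • (z - y), ?_, ?_, ?_⟩
  · exact smul_ne_zero (by positivity) (sub_ne_zero.2 hzy)
  · have := hC hy hz (a := a - min a b) (b := b + min a b)
      (by linarith [min_le_left a b]) (by positivity) (by ring_nf; linarith [hab])
    convert this using 1
    rw [← habx]
    module
  · have := hC hy hz (a := a + min a b) (b := b - min a b)
      (by positivity) (by linarith [min_le_right a b]) (by ring_nf; linarith [hab])
    convert this using 1
    rw [← habx]
    module

lemma combo {M : Set (E n)} (hM : Convex ℝ M) {c d x u v : E n} {α β b b' : ℝ}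
    (hc : c ∈ M) (hd : d ∈ M) (hb : 0 ≤ b) (hb' : 0 ≤ b') (hs : 0 < b + b')
    (hcE : c = x + α • u + b • v) (hdE : d = x + β • u - b' • v) :
    x + ((b' * α + b * β) / (b + b')) • u ∈ M := by
  have h := hM hc hd (a := b' / (b + b')) (b := b / (b + b'))
    (by positivity) (by positivity) (by field_simp; ring)
  convert h using 1
  rw [hcE, hdE]
  match_scalars <;> field_simp <;> ring

lemma extremePoints_inter_subset {K L : Set (E n)} (hK : Convex ℝ K) (hL : Convex ℝ L)
    (hKc : IsClosed K) (hLc : IsClosed L) (hU : Convex ℝ (K ∪ L)) :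
    (K ∩ L).extremePoints ℝ ⊆ K.extremePoints ℝ ∪ L.extremePoints ℝ := by
  intro x hx
  by_contra hcon
  rw [Set.mem_union] at hcon
  push_neg at hcon
  obtain ⟨hxK, hxL⟩ : x ∈ K ∧ x ∈ L := hx.1
  have hM : Convex ℝ (K ∩ L) := hK.inter hL
  have key : ∀ w : E n, x + w ∈ K ∩ L → x - w ∈ K ∩ L → w = 0 := by
    intro w h1 h2
    have hxseg : x ∈ openSegment ℝ (x + w) (x - w) :=
      ⟨1/2, 1/2, by norm_num, by norm_num, by norm_num, by module⟩
    have h := hx.2 h1 h2 hxseg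
    have hw : w = x + w - x := by abel
    rw [hw, h, sub_self]
  obtain ⟨u₀, hu0₀, hu1₀, hu2₀⟩ := exists_symm_pair hK hxK (fun h => hcon.1 h)
  obtain ⟨v₀, hv0₀, hv1₀, hv2₀⟩ := exists_symm_pair hL hxL (fun h => hcon.2 h)
  obtain ⟨u, hu0, huK₁, huK₂, huL⟩ :
      ∃ u : E n, u ≠ 0 ∧ x + u ∈ K ∧ x - u ∈ K ∧ x + u ∉ L := by
    by_cases h : x + u₀ ∈ L
    · refine ⟨-u₀, neg_ne_zero.2 hu0₀, by rwa [← sub_eq_add_neg], by rwa [sub_neg_eq_add], ?_⟩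
      rw [← sub_eq_add_neg]
      intro h2
      exact hu0₀ (key u₀ ⟨hu1₀, h⟩ ⟨hu2₀, h2⟩)
    · exact ⟨u₀, hu0₀, hu1₀, hu2₀, h⟩
  obtain ⟨v, hv0, hvL₁, hvL₂, hvK⟩ :
      ∃ v : E n, v ≠ 0 ∧ x + v ∈ L ∧ x - v ∈ L ∧ x + v ∉ K := by
    by_cases h : x + v₀ ∈ K
    · refine ⟨-v₀, neg_ne_zero.2 hv0₀, by rwa [← sub_eq_add_neg], by rwa [sub_neg_eq_add], ?_⟩
      rw [← sub_eq_add_neg]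
      intro h2
      exact hv0₀ (key v₀ ⟨h, hv1₀⟩ ⟨h2, hv2₀⟩)
    · exact ⟨v₀, hv0₀, hv1₀, hv2₀, h⟩
  obtain ⟨c₁, hc₁seg, hc₁⟩ := seg_meet hKc hLc
    (hU.segment_subset (Or.inl huK₁) (Or.inr hvL₁)) huK₁ hvL₁
  obtain ⟨c₂, hc₂seg, hc₂⟩ := seg_meet hKc hLc
    (hU.segment_subset (Or.inl huK₁) (Or.inr hvL₂)) huK₁ hvL₂
  obtain ⟨c₃, hc₃seg, hc₃⟩ := seg_meet hKc hLc
    (hU.segment_subset (Or.inl huK₂) (Or.inr hvL₁)) huK₂ hvL₁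
  obtain ⟨c₄, hc₄seg, hc₄⟩ := seg_meet hKc hLc
    (hU.segment_subset (Or.inl huK₂) (Or.inr hvL₂)) huK₂ hvL₂
  obtain ⟨a₁, b₁, ha₁, hb₁, hab₁, hE₁⟩ := hc₁seg
  obtain ⟨a₂, b₂, ha₂, hb₂, hab₂, hE₂⟩ := hc₂seg
  obtain ⟨a₃, b₃, ha₃, hb₃, hab₃, hE₃⟩ := hc₃seg
  obtain ⟨a₄, b₄, ha₄, hb₄, hab₄, hE₄⟩ := hc₄seg
  have hc₁E : c₁ = x + a₁ • u + b₁ • v := by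
    rw [← hE₁]; match_scalars <;> linarith
  have hc₂E : c₂ = x + a₂ • u - b₂ • v := by
    rw [← hE₂]; match_scalars <;> linarith
  have hc₃E : c₃ = x + a₃ • (-u) + b₃ • v := by
    rw [← hE₃]; match_scalars <;> linarith
  have hc₄E : c₄ = x + a₄ • (-u) - b₄ • v := by
    rw [← hE₄]; match_scalars <;> linarith
  have hb₁pos : 0 < b₁ := by
    rcases hb₁.lt_or_eq with h | h
    · exact h
    · exfalso; apply huL
      have hcc : c₁ = x + u := by rw [hc₁E, ← h]; have ha : a₁ = 1 := by linarith
                                  rw [ha]; module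
      rw [← hcc]; exact hc₁.2
  have ha₁pos : 0 < a₁ := by
    rcases ha₁.lt_or_eq with h | h
    · exact h
    · exfalso; apply hvK
      have hcc : c₁ = x + v := by rw [hc₁E, ← h]; have hbb : b₁ = 1 := by linarith
                                  rw [hbb]; module
      rw [← hcc]; exact hc₁.1
  have hb₂pos : 0 < b₂ := by
    rcases hb₂.lt_or_eq with h | h
    · exact h
    · exfalso; apply huL
      have hcc : c₂ = x + u := by rw [hc₂E, ← h]; have ha : a₂ = 1 := by linarith
                                  rw [ha]; module
      rw [← hcc]; exact hc₂.2
  have ha₃pos : 0 < a₃ := by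
    rcases ha₃.lt_or_eq with h | h
    · exact h
    · exfalso; apply hvK
      have hcc : c₃ = x + v := by rw [hc₃E, ← h]; have hbb : b₃ = 1 := by linarith
                                  rw [hbb]; module
      rw [← hcc]; exact hc₃.1
  have hp : x + ((b₂ * a₁ + b₁ * a₂) / (b₁ + b₂)) • u ∈ K ∩ L :=
    combo hM hc₁ hc₂ hb₁ hb₂ (by linarith) hc₁E hc₂E
  set σp : ℝ := (b₂ * a₁ + b₁ * a₂) / (b₁ + b₂) with hσp
  have hσppos : 0 < σp := div_pos (by nlinarith) (by linarith)
  have hneg : ∃ σ : ℝ, 0 < σ ∧ x - σ • u ∈ K ∩ L := by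
    rcases lt_or_ge 0 (b₃ + b₄) with hs | hs
    · refine ⟨(b₄ * a₃ + b₃ * a₄) / (b₃ + b₄), ?_, ?_⟩
      · apply div_pos _ hs
        rcases hb₄.lt_or_eq with h | h
        · nlinarith
        · have ha₄1 : a₄ = 1 := by linarith
          have hb₃pos : 0 < b₃ := by linarith
          nlinarith
      · have := combo hM hc₃ hc₄ hb₃ hb₄ hs hc₃E hc₄E
        rwa [smul_neg, ← sub_eq_add_neg] at this
    · have hb₃0 : b₃ = 0 := by linarith
      have ha₃1 : a₃ = 1 := by linarith
      refine ⟨1, one_pos, ?_⟩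
      have hcx : c₃ = x - u := by rw [hc₃E, hb₃0, ha₃1]; module
      rw [one_smul, ← hcx]
      exact hc₃
  obtain ⟨σm, hσmpos, hq⟩ := hneg
  have hxseg : x ∈ openSegment ℝ (x + σp • u) (x - σm • u) := by
    refine ⟨σm / (σp + σm), σp / (σp + σm), by positivity, by positivity,
      by field_simp; ring, ?_⟩
    match_scalars <;> field_simp <;> ring
  have h := hx.2 hp hq hxseg
  apply hu0
  have hσ : σp • u = x + σp • u - x := by abel
  have hz : σp • u = 0 := by rw [hσ, h, sub_self]
  exact (smul_eq_zero.1 hz).resolve_left hσppos.ne'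

lemma isPolytope_inter {K L : Set (E n)} (hK : IsPolytope K) (hL : IsPolytope L)
    (hU : Convex ℝ (K ∪ L)) (hne : (K ∩ L).Nonempty) : IsPolytope (K ∩ L) := by
  obtain ⟨S, -, rfl⟩ := hK
  obtain ⟨T, -, rfl⟩ := hL
  set K := convexHull ℝ (S : Set (E n))
  set L := convexHull ℝ (T : Set (E n))
  have hKconv : Convex ℝ K := convex_convexHull ℝ _
  have hLconv : Convex ℝ L := convex_convexHull ℝ _
  have hKcomp : IsCompact K := S.finite_toSet.isCompact_convexHull ℝ
  have hKc : IsClosed K := S.finite_toSet.isClosed_convexHull ℝ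
  have hLc : IsClosed L := T.finite_toSet.isClosed_convexHull ℝ
  have hMcomp : IsCompact (K ∩ L) := hKcomp.inter_right hLc
  have hMconv : Convex ℝ (K ∩ L) := hKconv.inter hLconv
  have hsub : (K ∩ L).extremePoints ℝ ⊆ (↑S ∪ ↑T : Set (E n)) :=
    (extremePoints_inter_subset hKconv hLconv hKc hLc hU).trans
      (union_subset_union extremePoints_convexHull_subset extremePoints_convexHull_subset)
  have hfin : ((K ∩ L).extremePoints ℝ).Finite :=
    (Set.Finite.union S.finite_toSet T.finite_toSet).subset hsub
  have hM : convexHull ℝ ((K ∩ L).extremePoints ℝ) = K ∩ L := by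
    conv_rhs => rw [← closure_convexHull_extremePoints hMcomp hMconv]
    exact ((hfin.isClosed_convexHull ℝ).closure_eq).symm
  refine ⟨hfin.toFinset, ?_, ?_⟩
  · rw [Finset.nonempty_iff_ne_empty]
    intro h
    have he : ((K ∩ L).extremePoints ℝ) = ∅ := by
      rw [← hfin.coe_toFinset, h]; simp
    rw [he, convexHull_empty] at hM
    exact hne.ne_empty hM.symm
  · rw [hfin.coe_toFinset, hM]

lemma cone_union {P Q : Set (E n)} (hPconv : Convex ℝ P) (hQconv : Convex ℝ Q)
    (hPne : P.Nonempty) (hQne : Q.Nonempty) (hPQ : Convex ℝ (P ∪ Q)) :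
    convexHull ℝ ({0} ∪ (P ∪ Q)) = convexHull ℝ ({0} ∪ P) ∪ convexHull ℝ ({0} ∪ Q) := by
  ext x
  rw [mem_union, cone_mem hPQ (hPne.mono subset_union_left), cone_mem hPconv hPne,
    cone_mem hQconv hQne]
  constructor
  · rintro ⟨z, hz | hz, hseg⟩
    exacts [Or.inl ⟨z, hz, hseg⟩, Or.inr ⟨z, hz, hseg⟩]
  · rintro (⟨z, hz, hseg⟩ | ⟨z, hz, hseg⟩)
    exacts [⟨z, Or.inl hz, hseg⟩, ⟨z, Or.inr hz, hseg⟩]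

lemma cone_inter {P Q : Set (E n)} (hPconv : Convex ℝ P) (hQconv : Convex ℝ Q)
    (hPc : IsClosed P) (hQc : IsClosed Q) (hPne : P.Nonempty) (hQne : Q.Nonempty)
    (hPQ : Convex ℝ (P ∪ Q)) :
    convexHull ℝ ({0} ∪ (P ∩ Q)) = convexHull ℝ ({0} ∪ P) ∩ convexHull ℝ ({0} ∪ Q) := by
  apply Set.Subset.antisymm
  · exact subset_inter (convexHull_mono (union_subset_union_right _ inter_subset_left))
      (convexHull_mono (union_subset_union_right _ inter_subset_right))
  · rintro x ⟨hx1, hx2⟩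
    obtain ⟨p, hp, hxp⟩ := (cone_mem hPconv hPne).1 hx1
    obtain ⟨q, hq, hxq⟩ := (cone_mem hQconv hQne).1 hx2
    obtain ⟨s, hs0, hs1, rfl⟩ := seg_zero_mem.1 hxp
    obtain ⟨t, ht0, ht1, hst⟩ := seg_zero_mem.1 hxq
    obtain ⟨r, hrseg, hrP, hrQ⟩ :=
      seg_meet hPc hQc (hPQ.segment_subset (Or.inl hp) (Or.inr hq)) hp hq
    have hMne : (P ∩ Q).Nonempty := ⟨r, hrP, hrQ⟩
    rw [cone_mem (hPconv.inter hQconv) hMne]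
    refine ⟨r, ⟨hrP, hrQ⟩, ?_⟩
    rw [seg_zero_mem]
    rcases eq_or_lt_of_le hs0 with hs | hs
    · exact ⟨0, le_rfl, zero_le_one, by rw [← hs]; simp⟩
    rcases eq_or_lt_of_le ht0 with ht | ht
    · refine ⟨0, le_rfl, zero_le_one, ?_⟩
      have hx0 : s • p = 0 := by rw [hst, ← ht]; simp
      rw [hx0]; simp
    · obtain ⟨a, b, ha, hb, hab, hr⟩ := hrseg
      have hc1 : 1 ≤ a / s + b / t := by
        have h1 : a ≤ a / s := by rw [le_div_iff₀ hs]; nlinarith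
        have h2 : b ≤ b / t := by rw [le_div_iff₀ ht]; nlinarith
        linarith
      have hcpos : 0 < a / s + b / t := lt_of_lt_of_le one_pos hc1
      have hrc : r = (a / s + b / t) • (s • p) := by
        have e1 : a • p = (a / s) • (s • p) := by
          rw [smul_smul, div_mul_cancel₀ _ hs.ne']
        have e2 : b • q = (b / t) • (s • p) := by
          rw [hst, smul_smul, div_mul_cancel₀ _ ht.ne']
        rw [← hr, e1, e2, ← add_smul]
      refine ⟨(a / s + b / t)⁻¹, by positivity, ?_, ?_⟩
      · rw [inv_le_one_iff₀]
        right; exact hc1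
      · rw [hrc, smul_smul, inv_mul_cancel₀ hcpos.ne', one_smul]

end Statement18Aux

set_option maxHeartbeats 800000 in
/-- `conv{0,·}` commutes with unions and intersections of polytopes with
convex union, and consequently `P ↦ Z(conv{0,P})` is a valuation. -/
theorem convexHull_zero_union_inter {n : ℕ} (P Q : Set (E n))
    (hP : IsPolytope P) (hQ : IsPolytope Q) (hPQ : Convex ℝ (P ∪ Q)) :
    convexHull ℝ ({0} ∪ (P ∪ Q)) = convexHull ℝ ({0} ∪ P) ∪ convexHull ℝ ({0} ∪ Q)
    ∧ convexHull ℝ ({0} ∪ (P ∩ Q)) = convexHull ℝ ({0} ∪ P) ∩ convexHull ℝ ({0} ∪ Q)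
    ∧ ∀ Z : Set (E n) → E n,
        (∀ A B : Set (E n), IsPolytope A → IsPolytope B →
          IsPolytope (A ∪ B) → IsPolytope (A ∩ B) → (0 : E n) ∈ A → (0 : E n) ∈ B →
          Z A + Z B = Z (A ∪ B) + Z (A ∩ B)) →
        Z (convexHull ℝ ({0} ∪ P)) + Z (convexHull ℝ ({0} ∪ Q))
          = Z (convexHull ℝ ({0} ∪ (P ∪ Q))) + Z (convexHull ℝ ({0} ∪ (P ∩ Q))) := by
  classical
  obtain ⟨S, hSne, hPS⟩ := hP
  obtain ⟨T, hTne, hQT⟩ := hQ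
  have hPconv : Convex ℝ P := hPS ▸ convex_convexHull ℝ _
  have hQconv : Convex ℝ Q := hQT ▸ convex_convexHull ℝ _
  have hPc : IsClosed P := hPS ▸ S.finite_toSet.isClosed_convexHull ℝ
  have hQc : IsClosed Q := hQT ▸ T.finite_toSet.isClosed_convexHull ℝ
  have hPne : P.Nonempty := hPS ▸ (Finset.coe_nonempty.2 hSne).convexHull
  have hQne : Q.Nonempty := hQT ▸ (Finset.coe_nonempty.2 hTne).convexHull
  have ha := cone_union hPconv hQconv hPne hQne hPQ
  have hb := cone_inter hPconv hQconv hPc hQc hPne hQne hPQ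
  refine ⟨ha, hb, ?_⟩
  intro Z hZ
  set A := convexHull ℝ ({0} ∪ P) with hA
  set B := convexHull ℝ ({0} ∪ Q) with hB
  have hApoly : IsPolytope A := by
    refine ⟨insert 0 S, Finset.insert_nonempty _ _, ?_⟩
    rw [hA, hPS, convexHull_convexHull_union_right]
    congr 1
    rw [Finset.coe_insert, Set.insert_eq]
  have hBpoly : IsPolytope B := by
    refine ⟨insert 0 T, Finset.insert_nonempty _ _, ?_⟩
    rw [hB, hQT, convexHull_convexHull_union_right]
    congr 1
    rw [Finset.coe_insert, Set.insert_eq]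
  have hSP : (↑S : Set (E n)) ⊆ P := by rw [hPS]; exact subset_convexHull ℝ _
  have hTQ : (↑T : Set (E n)) ⊆ Q := by rw [hQT]; exact subset_convexHull ℝ _
  have hPQhull : P ∪ Q = convexHull ℝ ((↑S ∪ ↑T) : Set (E n)) := by
    apply Set.Subset.antisymm
    · apply Set.union_subset
      · rw [hPS]; exact convexHull_mono Set.subset_union_left
      · rw [hQT]; exact convexHull_mono Set.subset_union_right
    · exact convexHull_min (Set.union_subset_union hSP hTQ) hPQ
  have hABpoly : IsPolytope (A ∪ B) := by
    refine ⟨insert 0 (S ∪ T), Finset.insert_nonempty _ _, ?_⟩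
    rw [← ha, hPQhull, convexHull_convexHull_union_right]
    congr 1
    rw [Finset.coe_insert, Finset.coe_union, Set.insert_eq]
  have h0A : (0 : E n) ∈ A := subset_convexHull ℝ _ (Or.inl rfl)
  have h0B : (0 : E n) ∈ B := subset_convexHull ℝ _ (Or.inl rfl)
  have hABconv : Convex ℝ (A ∪ B) := by
    rw [← ha]; exact convex_convexHull ℝ _
  have hABinter : IsPolytope (A ∩ B) :=
    isPolytope_inter hApoly hBpoly hABconv ⟨0, h0A, h0B⟩
  have hval := hZ A B hApoly hBpoly hABpoly hABinter h0A h0B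
  rw [ha, hb]
  exact hval
end
end
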